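/- arXiv:1101.0526 — 4 statements merged into one kernel-verified Lean document; each statement's English description precedes it below -/
import Mathlib

section
/- For every real number y > 0, the exponential integral satisfies ∫_y^∞ e^{-u}/u du = -γ - log y - Σ_{n≥1} (-1)^n y^n / (n · n!), where γ is the Euler–Mascheroni constant and the series on the right converges. -/
open Real MeasureTheory Set Filter Topology

namespace ExpIntAux


lemma summableAux (y : ℝ) :
    Summable (fun n : ℕ => (-1) ^ (n + 1) * y ^ (n + 1) /
      ((n + 1) * Nat.factorial (n + 1))) := by
  have h : Summable (fun n : ℕ => |y| ^ (n + 1) / Nat.factorial (n + 1)) := by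
    have := Real.summable_pow_div_factorial |y|
    exact (summable_nat_add_iff 1).2 this
  refine h.of_norm_bounded (fun n => ?_)
  have hfac : (0:ℝ) < Nat.factorial (n+1) := by positivity
  rw [Real.norm_eq_abs, abs_div, abs_mul, abs_pow, abs_pow, abs_neg, abs_one, one_pow, one_mul]
  have habs : |((n:ℝ) + 1) * (Nat.factorial (n+1) : ℝ)| = ((n:ℝ)+1) * Nat.factorial (n+1) := by
    rw [abs_of_pos]; positivity
  push_cast
  rw [habs]
  apply div_le_div_of_nonneg_left (by positivity) hfac
  nlinarith [hfac, (by positivity : (0:ℝ) ≤ (n:ℝ) * Nat.factorial (n+1))]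

lemma intExpDiv {y : ℝ} (hy : 0 < y) :
    IntegrableOn (fun u : ℝ => Real.exp (-u) / u) (Set.Ioi y) := by
  have hint : IntegrableOn (fun u : ℝ => (1/y) * Real.exp (-(1:ℝ) * u)) (Set.Ioi y) :=
    (exp_neg_integrableOn_Ioi y one_pos).const_mul _
  refine hint.integrable.mono' ?_ ?_
  · exact ((Real.measurable_exp.comp measurable_neg).div measurable_id).aestronglyMeasurable
  · filter_upwards [ae_restrict_mem measurableSet_Ioi] with t ht
    have ht0 : 0 < t := hy.trans ht
    rw [Real.norm_eq_abs, abs_div, abs_of_pos (Real.exp_pos _), abs_of_pos ht0]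
    rw [div_le_iff₀ ht0]
    have : Real.exp (-1 * t) = Real.exp (-t) := by norm_num
    rw [this]
    have := Real.exp_pos (-t)
    rw [div_mul_eq_mul_div, one_mul, div_mul_eq_mul_div, le_div_iff₀ hy]
    nlinarith [le_of_lt (show y < t from ht)]


lemma intExpLog : IntegrableOn (fun t : ℝ => Real.exp (-t) * Real.log t) (Set.Ioi 0) := by
  have h1 : IntegrableOn (fun x : ℝ => Real.exp (-x) * x ^ ((1/2 : ℝ) - 1)) (Set.Ioi 0) :=
    Real.GammaIntegral_convergent (by norm_num)
  have h2 : IntegrableOn (fun x : ℝ => Real.exp (-x) * x ^ ((2 : ℝ) - 1)) (Set.Ioi 0) :=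
    Real.GammaIntegral_convergent (by norm_num)
  refine ((h1.const_mul 2).add h2).mono' ?_ ?_
  · exact ((Real.measurable_exp.comp measurable_neg).mul
      Real.measurable_log).aestronglyMeasurable
  · filter_upwards [ae_restrict_mem measurableSet_Ioi] with t ht
    have ht0 : (0:ℝ) < t := ht
    have he : (0:ℝ) < Real.exp (-t) := Real.exp_pos _
    rw [Real.norm_eq_abs, abs_mul, abs_of_pos he]
    simp only [Pi.add_apply]
    rcases le_or_gt t 1 with h | h
    · -- |log t| ≤ 2 * t ^ (-1/2)
      have hlog : |Real.log t| ≤ 2 * t ^ (-(1/2) : ℝ) := by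
        rw [abs_of_nonpos (Real.log_nonpos ht0.le h)]
        have : Real.log (t ^ (-(1/2) : ℝ)) = -(1/2) * Real.log t := Real.log_rpow ht0 _
        have hle : Real.log (t ^ (-(1/2) : ℝ)) ≤ t ^ (-(1/2) : ℝ) :=
          (Real.log_le_sub_one_of_pos (Real.rpow_pos_of_pos ht0 _)).trans (by linarith [Real.rpow_pos_of_pos ht0 (-(1/2):ℝ)])
        nlinarith [this, hle]
      have hpos2 : (0:ℝ) ≤ Real.exp (-t) * t ^ ((2:ℝ) - 1) := by positivity
      have : Real.exp (-t) * |Real.log t| ≤ 2 * (Real.exp (-t) * t ^ ((1/2:ℝ) - 1)) := by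
        have : ((1/2:ℝ) - 1) = -(1/2) := by norm_num
        rw [this]
        nlinarith [he]
      exact this.trans (le_add_of_nonneg_right hpos2)
    · -- |log t| ≤ t
      have hlog : |Real.log t| ≤ t := by
        rw [abs_of_nonneg (Real.log_nonneg h.le)]
        linarith [Real.log_le_sub_one_of_pos ht0]
      have hpos1 : (0:ℝ) ≤ 2 * (Real.exp (-t) * t ^ ((1/2:ℝ) - 1)) := by positivity
      have h21 : t ^ ((2:ℝ) - 1) = t := by
        norm_num
      have : Real.exp (-t) * |Real.log t| ≤ Real.exp (-t) * t ^ ((2:ℝ)-1) := by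
        rw [h21]; nlinarith [he]
      exact this.trans (le_add_of_nonneg_left hpos1)


lemma integralExpLog :
    ∫ t in Set.Ioi (0:ℝ), Real.exp (-t) * Real.log t = -Real.eulerMascheroniConstant := by
  obtain ⟨I, hIdef⟩ : ∃ I : ℝ, I = ∫ t in Ioi (0:ℝ), Real.exp (-t) * Real.log t := ⟨_, rfl⟩
  rw [← hIdef]
  have h1 : HasDerivAt Complex.GammaIntegral
      (∫ t : ℝ in Ioi 0, (t:ℂ) ^ ((1:ℂ) - 1) * (Real.log t * Real.exp (-t))) 1 :=
    Complex.hasDerivAt_GammaIntegral (by norm_num)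
  have hI : (∫ t : ℝ in Ioi 0, (t:ℂ) ^ ((1:ℂ) - 1) * (Real.log t * Real.exp (-t)))
      = (I : ℂ) := by
    rw [hIdef]
    refine (setIntegral_congr_fun measurableSet_Ioi (fun t ht => ?_)).trans integral_ofReal
    show (t:ℂ) ^ ((1:ℂ) - 1) * (Real.log t * Real.exp (-t)) = ((Real.exp (-t) * Real.log t : ℝ) : ℂ)
    rw [sub_self, Complex.cpow_zero, one_mul]
    push_cast
    ring
  rw [hI] at h1
  have h2 : HasDerivAt Complex.Gamma (I : ℂ) 1 := by
    refine h1.congr_of_eventuallyEq ?_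
    have hmem : {s : ℂ | 0 < s.re} ∈ 𝓝 (1:ℂ) :=
      (isOpen_lt continuous_const Complex.continuous_re).mem_nhds (by norm_num)
    filter_upwards [hmem] with s hs
    exact Complex.Gamma_eq_integral hs
  have h3 := h2.comp_ofReal
  have h4 : HasDerivAt (fun x : ℝ => ((Real.Gamma x : ℝ) : ℂ))
      ((-Real.eulerMascheroniConstant : ℝ) : ℂ) (1:ℝ) :=
    Real.hasDerivAt_Gamma_one.ofReal_comp
  have h5 : (fun x : ℝ => Complex.Gamma (x:ℂ)) = fun x : ℝ => ((Real.Gamma x : ℝ) : ℂ) := by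
    funext x
    exact Complex.Gamma_ofReal x
  rw [h5] at h3
  exact_mod_cast h3.unique h4



lemma tendstoExpLog : Tendsto (fun u : ℝ => Real.exp (-u) * Real.log u) atTop (𝓝 0) := by
  have h1 : Tendsto (fun u : ℝ => Real.log u / u) atTop (𝓝 0) :=
    Real.isLittleO_log_id_atTop.tendsto_div_nhds_zero
  have h2 : Tendsto (fun u : ℝ => u ^ 1 * Real.exp (-u)) atTop (𝓝 0) :=
    Real.tendsto_pow_mul_exp_neg_atTop_nhds_zero 1
  have h3 := h1.mul h2
  rw [mul_zero] at h3
  refine h3.congr' ?_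
  filter_upwards [eventually_gt_atTop (0:ℝ)] with u hu
  rw [pow_one]
  field_simp

lemma stepA {y : ℝ} (hy : 0 < y) :
    ∫ u in Set.Ioi y, Real.exp (-u) / u =
      -(Real.exp (-y) * Real.log y) + ∫ u in Set.Ioi y, Real.exp (-u) * Real.log u := by
  have hlog : IntegrableOn (fun u : ℝ => Real.exp (-u) * Real.log u) (Set.Ioi y) :=
    intExpLog.mono_set (Set.Ioi_subset_Ioi hy.le)
  have hderiv : ∀ x ∈ Set.Ioi y, HasDerivAt (fun u : ℝ => Real.exp (-u) * Real.log u)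
      (Real.exp (-x) / x - Real.exp (-x) * Real.log x) x := by
    intro x hx
    have hx0 : 0 < x := hy.trans hx
    have h1 : HasDerivAt (fun u : ℝ => Real.exp (-u)) (-Real.exp (-x)) x := by
      simpa [Function.comp_def] using (Real.hasDerivAt_exp (-x)).comp x (hasDerivAt_neg x)
    have h2 : HasDerivAt (fun u : ℝ => Real.exp (-u) * Real.log u)
        (-Real.exp (-x) * Real.log x + Real.exp (-x) * x⁻¹) x :=
      h1.mul (Real.hasDerivAt_log hx0.ne')
    convert h2 using 1
    ring
  have hcont : ContinuousWithinAt (fun u : ℝ => Real.exp (-u) * Real.log u) (Set.Ici y) y := by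
    refine ContinuousAt.continuousWithinAt ?_
    exact (Real.continuous_exp.comp continuous_neg).continuousAt.mul
      (Real.continuousAt_log hy.ne')
  have hint : IntegrableOn (fun x : ℝ => Real.exp (-x) / x - Real.exp (-x) * Real.log x)
      (Set.Ioi y) := (intExpDiv hy).sub hlog
  have key := integral_Ioi_of_hasDerivAt_of_tendsto hcont hderiv hint tendstoExpLog
  rw [integral_sub (intExpDiv hy) hlog] at key
  linarith [key]



lemma intOneSubExpDiv {y : ℝ} (hy : 0 < y) :
    IntegrableOn (fun u : ℝ => (1 - Real.exp (-u)) / u) (Set.Ioc 0 y) := by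
  have hconst : IntegrableOn (fun _ : ℝ => (1:ℝ)) (Set.Ioc 0 y) :=
    integrableOn_const measure_Ioc_lt_top.ne
  refine hconst.mono' ?_ ?_
  · exact (((measurable_const.sub (Real.measurable_exp.comp measurable_neg))).div
      measurable_id).aestronglyMeasurable
  · filter_upwards [ae_restrict_mem measurableSet_Ioc] with u hu
    have hu0 : 0 < u := hu.1
    have hle : 1 - Real.exp (-u) ≤ u := by
      have := Real.add_one_le_exp (-u)
      linarith
    have hge : 0 ≤ 1 - Real.exp (-u) := by
      have : Real.exp (-u) ≤ 1 := Real.exp_le_one_iff.mpr (by linarith)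
      linarith
    rw [Real.norm_eq_abs, abs_div, abs_of_nonneg hge, abs_of_pos hu0, div_le_one hu0]
    exact hle

lemma tendstoF0 : Tendsto (fun u : ℝ => (1 - Real.exp (-u)) * Real.log u) (𝓝[>] 0) (𝓝 0) := by
  have hd : HasDerivAt (fun u : ℝ => 1 - Real.exp (-u)) 1 0 := by
    have h1 : HasDerivAt (fun u : ℝ => Real.exp (-u)) (-Real.exp (-(0:ℝ))) 0 := by
      simpa [Function.comp_def] using (Real.hasDerivAt_exp (-(0:ℝ))).comp 0 (hasDerivAt_neg (0:ℝ))
    simpa [Pi.sub_def] using (hasDerivAt_const (0:ℝ) (1:ℝ)).sub h1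
  have hs := hasDerivAt_iff_tendsto_slope.mp hd
  have hA : Tendsto (fun u : ℝ => (1 - Real.exp (-u)) / u) (𝓝[>] 0) (𝓝 1) := by
    have hs' : Tendsto (slope (fun u : ℝ => 1 - Real.exp (-u)) 0) (𝓝[>] 0) (𝓝 1) :=
      hs.mono_left (nhdsWithin_mono _ (fun u hu => ne_of_gt hu))
    refine hs'.congr' ?_
    filter_upwards [self_mem_nhdsWithin] with u hu
    rw [slope_def_field]
    simp
  have hB : Tendsto (fun u : ℝ => u * Real.log u) (𝓝[>] 0) (𝓝 0) := by
    have := tendsto_log_mul_rpow_nhdsGT_zero one_pos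
    have h' : Tendsto (fun u : ℝ => Real.log u * u) (𝓝[>] 0) (𝓝 0) := by
      refine this.congr' ?_
      filter_upwards [self_mem_nhdsWithin] with u hu
      rw [Real.rpow_one]
    simpa [mul_comm] using h'
  have h3 := hA.mul hB
  rw [one_mul] at h3
  refine h3.congr' ?_
  filter_upwards [self_mem_nhdsWithin] with u hu
  have hu' : u ≠ 0 := ne_of_gt hu
  field_simp

lemma contWithinF {y : ℝ} (hy : 0 < y) :
    ContinuousOn (fun u : ℝ => (1 - Real.exp (-u)) * Real.log u) (Set.Icc 0 y) := by
  intro x hx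
  rcases hx.1.eq_or_lt with rfl | hx0
  · have hsing : Tendsto (fun u : ℝ => (1 - Real.exp (-u)) * Real.log u)
        (𝓝[{(0:ℝ)}] 0) (𝓝 0) := by
      rw [nhdsWithin_singleton]
      have := tendsto_pure_nhds (fun u : ℝ => (1 - Real.exp (-u)) * Real.log u) 0
      simpa using this
    have hIci : Tendsto (fun u : ℝ => (1 - Real.exp (-u)) * Real.log u)
        (𝓝[Set.Ici (0:ℝ)] 0) (𝓝 0) := by
      have hunion : Set.Ici (0:ℝ) = {(0:ℝ)} ∪ Set.Ioi 0 := by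
        ext u; simp [le_iff_lt_or_eq, eq_comm, or_comm]
      rw [hunion, nhdsWithin_union, tendsto_sup]
      exact ⟨hsing, tendstoF0⟩
    have hIcc : Tendsto (fun u : ℝ => (1 - Real.exp (-u)) * Real.log u)
        (𝓝[Set.Icc 0 y] 0) (𝓝 0) :=
      hIci.mono_left (nhdsWithin_mono _ (fun u hu => hu.1))
    show Tendsto _ (𝓝[Set.Icc 0 y] 0) (𝓝 ((1 - Real.exp (-(0:ℝ))) * Real.log 0))
    rw [show (1 - Real.exp (-(0:ℝ))) * Real.log 0 = 0 by simp]
    exact hIcc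
  · exact ContinuousAt.continuousWithinAt
      (((continuous_const.sub (Real.continuous_exp.comp continuous_neg)).continuousAt).mul
        (Real.continuousAt_log hx0.ne'))

lemma stepD {y : ℝ} (hy : 0 < y) :
    ∫ u in Set.Ioc 0 y, Real.exp (-u) * Real.log u =
      (1 - Real.exp (-y)) * Real.log y - ∫ u in Set.Ioc 0 y, (1 - Real.exp (-u)) / u := by
  have hg1 : IntegrableOn (fun u : ℝ => Real.exp (-u) * Real.log u) (Set.Ioc 0 y) :=
    intExpLog.mono_set Set.Ioc_subset_Ioi_self
  have hg2 := intOneSubExpDiv hy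
  have hderiv : ∀ x ∈ Set.Ioo 0 y,
      HasDerivWithinAt (fun u : ℝ => (1 - Real.exp (-u)) * Real.log u)
        (Real.exp (-x) * Real.log x + (1 - Real.exp (-x)) / x) (Set.Ioi x) x := by
    intro x hx
    have hx0 : 0 < x := hx.1
    have h1 : HasDerivAt (fun u : ℝ => 1 - Real.exp (-u)) (Real.exp (-x)) x := by
      have h1' : HasDerivAt (fun u : ℝ => Real.exp (-u)) (-Real.exp (-x)) x := by
        simpa [Function.comp_def] using (Real.hasDerivAt_exp (-x)).comp x (hasDerivAt_neg x)
      simpa [Pi.sub_def] using (hasDerivAt_const x (1:ℝ)).sub h1'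
    have h2 : HasDerivAt (fun u : ℝ => (1 - Real.exp (-u)) * Real.log u)
        (Real.exp (-x) * Real.log x + (1 - Real.exp (-x)) / x) x :=
      (h1.mul (Real.hasDerivAt_log hx0.ne')).congr_deriv (by ring)
    refine HasDerivAt.hasDerivWithinAt ?_
    convert h2 using 1
  have hint : IntervalIntegrable
      (fun x : ℝ => Real.exp (-x) * Real.log x + (1 - Real.exp (-x)) / x) volume 0 y := by
    rw [intervalIntegrable_iff_integrableOn_Ioc_of_le hy.le]
    exact hg1.add hg2
  have key := intervalIntegral.integral_eq_sub_of_hasDeriv_right_of_le hy.le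
    (contWithinF hy) hderiv hint
  rw [intervalIntegral.integral_of_le hy.le] at key
  rw [MeasureTheory.integral_add hg1 hg2] at key
  have hf0 : (1 - Real.exp (-(0:ℝ))) * Real.log 0 = 0 := by simp
  rw [hf0, sub_zero] at key
  linarith [key]


lemma seriesPointwise {u : ℝ} (hu : 0 < u) :
    (1 - Real.exp (-u)) / u = ∑' n : ℕ, (-1) ^ n * u ^ n / Nat.factorial (n + 1) := by
  have hexp : Real.exp (-u) = ∑' n : ℕ, (-u) ^ n / Nat.factorial n := by
    rw [Real.exp_eq_exp_ℝ, NormedSpace.exp_eq_tsum_div]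
  have hsum : Summable (fun n : ℕ => (-u) ^ n / (Nat.factorial n : ℝ)) :=
    Real.summable_pow_div_factorial (-u)
  have hzero : ∑' n : ℕ, (-u) ^ n / (Nat.factorial n : ℝ) =
      1 + ∑' n : ℕ, (-u) ^ (n + 1) / Nat.factorial (n + 1) := by
    rw [hsum.tsum_eq_zero_add]
    simp
  have h1 : 1 - Real.exp (-u) = ∑' n : ℕ, (-1) ^ n * u ^ (n + 1) / Nat.factorial (n + 1) := by
    rw [hexp, hzero, show ∀ a : ℝ, 1 - (1 + a) = -a from fun a => by ring, ← tsum_neg]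
    congr 1 with n
    rw [← neg_div]
    congr 1
    rw [neg_pow, pow_succ (-1:ℝ)]
    ring
  rw [h1, ← tsum_div_const]
  congr 1 with n
  rw [div_div, pow_succ]
  field_simp


lemma summableNorm {y : ℝ} (hy : 0 < y) :
    Summable (fun n : ℕ => y ^ (n + 1) / ((n + 1) * Nat.factorial (n + 1))) := by
  have h : Summable (fun n : ℕ => y ^ (n + 1) / Nat.factorial (n + 1)) :=
    (summable_nat_add_iff 1).2 (Real.summable_pow_div_factorial y)
  refine Summable.of_nonneg_of_le (fun n => by positivity) (fun n => ?_) h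
  have hfac : (0:ℝ) < Nat.factorial (n+1) := by positivity
  apply div_le_div_of_nonneg_left (by positivity) hfac
  push_cast
  nlinarith [hfac, (by positivity : (0:ℝ) ≤ (n:ℝ) * Nat.factorial (n+1))]

lemma stepE {y : ℝ} (hy : 0 < y) :
    ∫ u in Set.Ioc 0 y, (1 - Real.exp (-u)) / u =
      ∑' n : ℕ, (-1) ^ n * y ^ (n + 1) / ((n + 1) * Nat.factorial (n + 1)) := by
  have hFc : ∀ n : ℕ, Continuous (fun u : ℝ => (-1:ℝ) ^ n * u ^ n / Nat.factorial (n+1)) :=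
    fun n => by fun_prop
  have hFint : ∀ n : ℕ, Integrable (fun u : ℝ => (-1:ℝ) ^ n * u ^ n / Nat.factorial (n+1))
      (volume.restrict (Set.Ioc 0 y)) := fun n => (hFc n).integrableOn_Ioc
  have hpow : ∀ n : ℕ, ∫ u in Set.Ioc (0:ℝ) y, u ^ n = y ^ (n+1) / (n+1) := by
    intro n
    rw [← intervalIntegral.integral_of_le hy.le, integral_pow]
    simp
  have hFval : ∀ n : ℕ, (∫ u in Set.Ioc (0:ℝ) y, (-1:ℝ) ^ n * u ^ n / Nat.factorial (n+1))
      = (-1) ^ n * y ^ (n+1) / ((n+1) * Nat.factorial (n+1)) := by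
    intro n
    have : (fun u : ℝ => (-1:ℝ) ^ n * u ^ n / Nat.factorial (n+1))
        = fun u : ℝ => ((-1:ℝ) ^ n / Nat.factorial (n+1)) * u ^ n :=
      funext fun u => by ring
    rw [this, MeasureTheory.integral_const_mul, hpow n]
    have hfac : ((Nat.factorial (n+1) : ℝ)) ≠ 0 := by positivity
    have hn1 : ((n:ℝ) + 1) ≠ 0 := by positivity
    field_simp
  have hnorm : ∀ n : ℕ, (∫ u in Set.Ioc (0:ℝ) y, ‖(-1:ℝ) ^ n * u ^ n / Nat.factorial (n+1)‖)
      = y ^ (n+1) / ((n+1) * Nat.factorial (n+1)) := by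
    intro n
    have hcongr : ∀ u ∈ Set.Ioc (0:ℝ) y, ‖(-1:ℝ) ^ n * u ^ n / Nat.factorial (n+1)‖
        = ((1:ℝ) / Nat.factorial (n+1)) * u ^ n := by
      intro u hu
      have hu0 : (0:ℝ) < u := hu.1
      have hfac : (0:ℝ) < (Nat.factorial (n+1) : ℝ) := by positivity
      rw [Real.norm_eq_abs, abs_div, abs_mul, abs_pow, abs_pow, abs_neg, abs_one, one_pow,
        one_mul, abs_of_pos hu0, abs_of_pos hfac]
      ring
    rw [setIntegral_congr_fun measurableSet_Ioc hcongr, MeasureTheory.integral_const_mul, hpow n]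
    have hfac : ((Nat.factorial (n+1) : ℝ)) ≠ 0 := by positivity
    have hn1 : ((n:ℝ) + 1) ≠ 0 := by positivity
    field_simp
  have hsummed : Summable (fun n : ℕ =>
      ∫ u in Set.Ioc (0:ℝ) y, ‖(-1:ℝ) ^ n * u ^ n / Nat.factorial (n+1)‖) := by
    rw [show (fun n : ℕ => ∫ u in Set.Ioc (0:ℝ) y, ‖(-1:ℝ) ^ n * u ^ n / Nat.factorial (n+1)‖)
        = fun n : ℕ => y ^ (n+1) / ((n+1) * Nat.factorial (n+1)) from funext hnorm]
    exact summableNorm hy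
  have hswap := MeasureTheory.integral_tsum_of_summable_integral_norm hFint hsummed
  have hcongr2 : (∫ u in Set.Ioc (0:ℝ) y,
      (∑' n : ℕ, (-1:ℝ) ^ n * u ^ n / Nat.factorial (n+1)))
      = ∫ u in Set.Ioc (0:ℝ) y, (1 - Real.exp (-u)) / u :=
    setIntegral_congr_fun measurableSet_Ioc fun u hu => (seriesPointwise hu.1).symm
  rw [← hcongr2, ← hswap]
  congr 1
  funext n
  exact hFval n

end ExpIntAux

open ExpIntAux in
/-- For every real `y > 0`,
`∫_y^∞ e^{-u}/u du = -γ - log y - Σ_{n ≥ 1} (-1)^n yⁿ/(n·n!)`,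
where `γ` is the Euler–Mascheroni constant, and the series converges. -/
theorem exponential_integral_eq_euler_mascheroni_sub_log_sub_series (y : ℝ) (hy : 0 < y) :
    Summable (fun n : ℕ => (-1) ^ (n + 1) * y ^ (n + 1) /
      ((n + 1) * Nat.factorial (n + 1))) ∧
    ∫ u in Set.Ioi y, Real.exp (-u) / u =
      -Real.eulerMascheroniConstant - Real.log y -
        ∑' n : ℕ, (-1) ^ (n + 1) * y ^ (n + 1) / ((n + 1) * Nat.factorial (n + 1)) := by
  refine ⟨summableAux y, ?_⟩
  have hsplit : ∫ t in Set.Ioi (0:ℝ), Real.exp (-t) * Real.log t =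
      (∫ t in Set.Ioc 0 y, Real.exp (-t) * Real.log t) +
      ∫ t in Set.Ioi y, Real.exp (-t) * Real.log t := by
    rw [← MeasureTheory.setIntegral_union (by simp [Set.disjoint_left]) measurableSet_Ioi
      (intExpLog.mono_set Set.Ioc_subset_Ioi_self) (intExpLog.mono_set
        (Set.Ioi_subset_Ioi hy.le))]
    rw [Set.Ioc_union_Ioi_eq_Ioi hy.le]
  have hTsum : ∑' n : ℕ, (-1) ^ (n + 1) * y ^ (n + 1) / ((n + 1) * Nat.factorial (n + 1))
      = -∑' n : ℕ, (-1) ^ n * y ^ (n + 1) / ((n + 1) * Nat.factorial (n + 1)) := by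
    rw [← tsum_neg]
    congr 1 with n
    ring
  rw [stepA hy, hTsum]
  have h2 := integralExpLog
  rw [hsplit, stepD hy, stepE hy] at h2
  have hexp : Real.exp (-y) * Real.log y + ((1 - Real.exp (-y)) * Real.log y) = Real.log y := by
    ring
  linarith [h2]
end

section
/- Let K be a field of characteristic zero. If A, B ∈ K⟦z⟧ are D-finite formal power series, then their Hadamard product A * B is D-finite. -/
open PowerSeries

/-- The Hadamard product of two formal power series: termwise product of coefficients. -/
noncomputable def hadamardMul {K : Type*} [CommRing K] (A B : PowerSeries K) : PowerSeries K :=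
  PowerSeries.mk fun n => coeff n A * coeff n B

/-- A formal power series `A ∈ K⟦z⟧` is algebraic over `K(z)`: there is a nonzero
polynomial `P ∈ K[z][y]` with `P(A) = 0`. -/
def IsAlgebraicPS {K : Type*} [CommRing K] (A : PowerSeries K) : Prop :=
  ∃ P : Polynomial (Polynomial K), P ≠ 0 ∧
    Polynomial.eval₂ Polynomial.coeToPowerSeries.ringHom A P = 0

/-- `A` has Hadamard grade at most `d` over `K`: it is the Hadamard product of `d`
formal power series, each algebraic over `K(z)`. -/
def HadamardGradeLe {K : Type*} [CommRing K] (A : PowerSeries K) (d : ℕ) : Prop :=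
  ∃ B : Fin d → PowerSeries K, (∀ i, IsAlgebraicPS (B i)) ∧
    ∀ n, coeff n A = ∏ i, coeff n (B i)

/-- A formal power series `A ∈ K⟦z⟧` is D-finite: there are polynomials `p₀, …, p_m`,
not all zero, with `p_m A⁽ᵐ⁾ + ⋯ + p₁ A' + p₀ A = 0`. -/
def IsDFinitePS {K : Type*} [CommRing K] (A : PowerSeries K) : Prop :=
  ∃ (m : ℕ) (p : Fin (m + 1) → Polynomial K), (∃ i, p i ≠ 0) ∧
    ∑ i : Fin (m + 1), ((p i : PowerSeries K) * (⇑(PowerSeries.derivative K))^[i] A) = 0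

/-- A formal power series is rational: `Q · A = P` with `Q(0) ≠ 0`. -/
def IsRationalPS {K : Type*} [CommRing K] (A : PowerSeries K) : Prop :=
  ∃ P Q : Polynomial K, Q.coeff 0 ≠ 0 ∧ (Q : PowerSeries K) * A = (P : PowerSeries K)

open Polynomial Finset Filter in
section

section Aux
variable {K : Type*} [Field K] [CharZero K]

/-- extension of the coefficient sequence to ℤ by zero -/
noncomputable def extCoeff (A : PowerSeries K) : ℤ → K :=
  fun n => if 0 ≤ n then coeff n.toNat A else 0

@[simp] lemma extCoeff_ofNat (A : PowerSeries K) (n : ℕ) :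
    extCoeff A (n : ℤ) = coeff n A := by
  simp [extCoeff]

lemma extCoeff_neg (A : PowerSeries K) {n : ℤ} (h : n < 0) : extCoeff A n = 0 := by
  simp [extCoeff, not_le.mpr h]

/-- P-recursive over ℤ -/
def PRecZ {K : Type*} [Field K] (a : ℤ → K) : Prop :=
  ∃ (r : ℕ) (q : ℕ → Polynomial K), (∃ k, k ≤ r ∧ q k ≠ 0) ∧
    ∀ n : ℤ, ∑ k ∈ range (r + 1), (q k).eval (n : K) * a (n + k) = 0

lemma extCoeff_hadamard (A B : PowerSeries K) (n : ℤ) :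
    extCoeff (hadamardMul A B) n = extCoeff A n * extCoeff B n := by
  rcases le_or_gt 0 n with h | h
  · obtain ⟨m, rfl⟩ := Int.eq_ofNat_of_zero_le h
    simp [hadamardMul]
  · simp [extCoeff_neg _ h]

lemma coeff_iter_derivative (A : PowerSeries K) (i m : ℕ) :
    coeff m ((⇑(PowerSeries.derivative K))^[i] A)
      = coeff (m + i) A * ∏ t ∈ range i, ((m : K) + t + 1) := by
  induction i generalizing A m with
  | zero => simp
  | succ i ih =>
    rw [Function.iterate_succ_apply, ih, PowerSeries.coeff_derivative,
      Finset.prod_range_succ, show m + i + 1 = m + (i + 1) from rfl]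
    push_cast
    ring

/-- the key vanishing: if `n - j < 0` then the falling-factorial times extended
coefficient vanishes -/
lemma term_vanish (a : ℤ → K) (ha : ∀ n < 0, a n = 0) (i j : ℕ) (n : ℤ) (h : n - j < 0) :
    (∏ t ∈ range i, ((n : K) - j + t + 1)) * a (n - j + i) = 0 := by
  by_cases hc : n - j + i < 0
  · rw [ha _ hc, mul_zero]
  · apply mul_eq_zero_of_left
    apply Finset.prod_eq_zero (i := (j - n - 1).toNat)
    · rw [Finset.mem_range]; omega
    · have : ((j - n - 1).toNat : ℤ) = j - n - 1 := by omega
      have : (((j - n - 1).toNat : ℤ) : K) = ((j : ℤ) - n - 1 : ℤ) := by rw [this]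
      push_cast at this ⊢
      rw [this]; ring

end Aux

variable {K : Type*} [Field K] [CharZero K]

lemma coeff_polyMul (p : Polynomial K) (f : PowerSeries K) (n : ℕ) :
    coeff n ((p : PowerSeries K) * f) = ∑ j ∈ range (n + 1), p.coeff j * coeff (n - j) f := by
  rw [PowerSeries.coeff_mul, Finset.Nat.sum_antidiagonal_eq_sum_range_succ
    (f := fun a b => coeff a (p : PowerSeries K) * coeff b f)]
  simp [Polynomial.coeff_coe]

lemma ffpoly_monic (i : ℕ) (c : ℕ → K) : (∏ t ∈ range i, (Polynomial.X + Polynomial.C (c t))).Monic :=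
  monic_prod_of_monic _ _ fun t _ => monic_X_add_C _

lemma ffpoly_natDegree (i : ℕ) (c : ℕ → K) :
    (∏ t ∈ range i, (Polynomial.X + Polynomial.C (c t))).natDegree = i := by
  rw [Polynomial.natDegree_prod _ _ (fun t _ => (monic_X_add_C _).ne_zero)]
  simp

lemma ffpoly_coeff_self (i : ℕ) (c : ℕ → K) :
    (∏ t ∈ range i, (Polynomial.X + Polynomial.C (c t))).coeff i = 1 := by
  have h := (ffpoly_monic i c).coeff_natDegree
  rwa [ffpoly_natDegree] at h

section Step1
variable {K : Type*} [Field K] [CharZero K]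

lemma prec_of_dfinite (A : PowerSeries K) (h : IsDFinitePS A) : PRecZ (extCoeff A) := by
  classical
  obtain ⟨m, p, hpne, heq⟩ := h
  set a := extCoeff A with ha
  have ha0 : ∀ n < 0, a n = 0 := fun n hn => extCoeff_neg A hn
  set J := Finset.sup Finset.univ (fun i : Fin (m+1) => (p i).natDegree) with hJ
  set F : ℤ → K := fun n => ∑ i : Fin (m+1), ∑ j ∈ range (J+1),
      (p i).coeff j * ((∏ t ∈ range (i : ℕ), ((n : K) - j + t + 1)) * a (n - j + i)) with hF
  -- F vanishes
  have hF0 : ∀ n : ℤ, F n = 0 := by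
    intro n
    rcases lt_or_ge n 0 with hn | hn
    · apply Finset.sum_eq_zero; intro i _
      apply Finset.sum_eq_zero; intro j _
      rw [term_vanish a ha0 _ _ _ (by omega), mul_zero]
    · obtain ⟨n, rfl⟩ := Int.eq_ofNat_of_zero_le hn
      have hco : coeff n (∑ i : Fin (m + 1),
          ((p i : PowerSeries K) * (⇑(PowerSeries.derivative K))^[(i : ℕ)] A)) = 0 := by
        rw [heq]; simp
      rw [map_sum] at hco
      rw [hF]
      rw [← hco]
      apply Finset.sum_congr rfl
      intro i _
      rw [coeff_polyMul]
      -- both sides equal sum over range (n + J + 2)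
      have key : ∀ j ∈ range (n+1), (p i).coeff j * coeff (n - j) ((⇑(PowerSeries.derivative K))^[(i : ℕ)] A)
          = (p i).coeff j * ((∏ t ∈ range (i : ℕ), (((n : ℤ) : K) - j + t + 1)) * a ((n : ℤ) - j + i)) := by
        intro j hj
        rw [Finset.mem_range] at hj
        have hjn : j ≤ n := by omega
        rw [coeff_iter_derivative]
        have h1 : ((n : ℤ) - j + i) = ((n - j + i : ℕ) : ℤ) := by push_cast; omega
        have h2 : a ((n : ℤ) - j + i) = coeff (n - j + i) A := by rw [h1, ha, extCoeff_ofNat]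
        rw [h2]
        have h3 : ∀ t : ℕ, ((n - j : ℕ) : K) + (t : K) + 1 = ((n : ℤ) : K) - (j : K) + (t : K) + 1 := by
          intro t
          have : ((n - j : ℕ) : ℤ) = (n : ℤ) - j := by omega
          have h4 : ((n - j : ℕ) : K) = ((n : ℤ) : K) - (j : K) := by
            rw [show ((n - j : ℕ) : K) = (((n - j : ℕ) : ℤ) : K) by push_cast; ring, this]
            push_cast; ring
          rw [h4]
        rw [Finset.prod_congr rfl (fun t _ => h3 t)]
        ring
      rw [Finset.sum_congr rfl key]
      -- now extend both sums to range (n + J + 2)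
      have e1 : ∑ j ∈ range (n+1), (p i).coeff j * ((∏ t ∈ range (i : ℕ), (((n : ℤ) : K) - j + t + 1)) * a ((n : ℤ) - j + i))
          = ∑ j ∈ range (n + J + 2), (p i).coeff j * ((∏ t ∈ range (i : ℕ), (((n : ℤ) : K) - j + t + 1)) * a ((n : ℤ) - j + i)) := by
        apply Finset.sum_subset
        · apply Finset.range_subset_range.mpr; omega
        · intro j _ hj
          rw [Finset.mem_range] at hj
          rw [term_vanish a ha0 _ _ _ (by omega), mul_zero]
      have e2 : ∑ j ∈ range (J+1), (p i).coeff j * ((∏ t ∈ range (i : ℕ), (((n : ℤ) : K) - j + t + 1)) * a ((n : ℤ) - j + i))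
          = ∑ j ∈ range (n + J + 2), (p i).coeff j * ((∏ t ∈ range (i : ℕ), (((n : ℤ) : K) - j + t + 1)) * a ((n : ℤ) - j + i)) := by
        apply Finset.sum_subset
        · apply Finset.range_subset_range.mpr; omega
        · intro j _ hj
          rw [Finset.mem_range] at hj
          have hdJ : (p i).natDegree ≤ J := by
            simpa using Finset.le_sup (f := fun i : Fin (m+1) => (p i).natDegree) (Finset.mem_univ i)
          have : (p i).natDegree < j := by omega
          rw [Polynomial.coeff_eq_zero_of_natDegree_lt this, zero_mul]
      rw [e1, ← e2]
  -- recurrence polynomials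
  set Q : ℕ → Polynomial K := fun k => ∑ i : Fin (m+1), ∑ j ∈ range (J+1),
      if (i : ℕ) + J = k + j then Polynomial.C ((p i).coeff j) *
        ∏ t ∈ range (i : ℕ), (Polynomial.X + Polynomial.C ((t : K) + 1 - (j:K))) else 0 with hQ
  have hQeval : ∀ (k : ℕ) (x : K), (Q k).eval x = ∑ i : Fin (m+1), ∑ j ∈ range (J+1),
      if (i : ℕ) + J = k + j then ((p i).coeff j) * ∏ t ∈ range (i : ℕ), (x + ((t : K) + 1 - j)) else 0 := by
    intro k x
    rw [hQ, Polynomial.eval_finset_sum]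
    apply Finset.sum_congr rfl; intro i _
    rw [Polynomial.eval_finset_sum]
    apply Finset.sum_congr rfl; intro j _
    rw [apply_ite (Polynomial.eval x)]
    simp [Polynomial.eval_prod]
  have hrec : ∀ n : ℤ, ∑ k ∈ range (m + J + 1), (Q k).eval ((n : K) + J) * a (n + k) = F (n + J) := by
    intro n
    have step : ∀ k ∈ range (m+J+1), (Q k).eval ((n:K) + J) * a (n + k)
        = ∑ i : Fin (m+1), ∑ j ∈ range (J+1),
          if (i : ℕ) + J = k + j then ((p i).coeff j) * ((∏ t ∈ range (i:ℕ), ((n:K) + J + ((t:K) + 1 - j))) * a (n + k)) else 0 := by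
      intro k _
      rw [hQeval, Finset.sum_mul]
      apply Finset.sum_congr rfl; intro i _
      rw [Finset.sum_mul]
      apply Finset.sum_congr rfl; intro j _
      rw [ite_mul, zero_mul, mul_assoc]
    rw [Finset.sum_congr rfl step, hF, Finset.sum_comm]
    apply Finset.sum_congr rfl; intro i _
    rw [Finset.sum_comm]
    apply Finset.sum_congr rfl; intro j hj
    rw [Finset.mem_range] at hj
    rw [Finset.sum_eq_single ((i:ℕ) + J - j)]
    · rw [if_pos (by omega)]
      have harg : n + ((((i:ℕ) + J - j : ℕ)) : ℤ) = n + J - j + i := by push_cast; omega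
      rw [harg]
      have hfac : ∀ t ∈ range (i:ℕ), (n:K) + J + ((t:K) + 1 - j) = ((n + J : ℤ) : K) - j + t + 1 := by
        intro t _; push_cast; ring
      rw [Finset.prod_congr rfl hfac]
    · intro k _ hkne
      rw [if_neg (by omega)]
    · intro hk
      exact absurd (Finset.mem_range.mpr (by omega)) hk
  -- nontriviality
  obtain ⟨i₁, hi₁⟩ := hpne
  have hsne : (Finset.univ.filter (fun i : Fin (m+1) => p i ≠ 0)).Nonempty := ⟨i₁, by simp [hi₁]⟩
  set i₀ := (Finset.univ.filter (fun i : Fin (m+1) => p i ≠ 0)).max' hsne with hi₀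
  have hp₀ : p i₀ ≠ 0 := by
    have := Finset.max'_mem _ hsne
    rw [← hi₀, Finset.mem_filter] at this
    exact this.2
  have hmax : ∀ i : Fin (m+1), (i₀ : ℕ) < (i : ℕ) → p i = 0 := by
    intro i hi
    by_contra hne
    have hle : i ≤ i₀ := Finset.le_max' _ i (by simp [hne])
    rw [Fin.le_def] at hle
    omega
  set j₀ := (p i₀).natDegree with hj₀
  have hj₀J : j₀ ≤ J := by
    simpa [hJ] using Finset.le_sup (f := fun i : Fin (m+1) => (p i).natDegree) (Finset.mem_univ i₀)
  have hc : (p i₀).coeff j₀ ≠ 0 := by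
    rw [hj₀, ← Polynomial.leadingCoeff]
    exact Polynomial.leadingCoeff_ne_zero.mpr hp₀
  set k₀ := (i₀ : ℕ) + J - j₀ with hk₀
  have hQc : (Q k₀).coeff (i₀ : ℕ) = (p i₀).coeff j₀ := by
    rw [hQ, Polynomial.finset_sum_coeff, Finset.sum_eq_single i₀]
    · rw [Polynomial.finset_sum_coeff, Finset.sum_eq_single j₀]
      · rw [if_pos (by omega), Polynomial.coeff_C_mul, ffpoly_coeff_self, mul_one]
      · intro j hj hne
        rw [Finset.mem_range] at hj
        rw [apply_ite (fun f : Polynomial K => f.coeff (i₀:ℕ)), if_neg (by omega)]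
        exact Polynomial.coeff_zero _
      · intro h; exact absurd (Finset.mem_range.mpr (by omega)) h
    · intro i _ hne
      rw [Polynomial.finset_sum_coeff]
      apply Finset.sum_eq_zero; intro j hj
      rw [Finset.mem_range] at hj
      rw [apply_ite (fun f : Polynomial K => f.coeff (i₀:ℕ))]
      by_cases hcond : (i:ℕ) + J = k₀ + j
      · rw [if_pos hcond]
        have hine : (i : ℕ) ≠ (i₀ : ℕ) := fun h => hne (Fin.ext h)
        rcases lt_or_gt_of_ne hine with hlt | hgt
        · apply Polynomial.coeff_eq_zero_of_natDegree_lt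
          calc (Polynomial.C ((p i).coeff j) * ∏ t ∈ range (i:ℕ), (Polynomial.X + Polynomial.C ((t : K) + 1 - (j:K)))).natDegree
              ≤ (Polynomial.C ((p i).coeff j)).natDegree + (∏ t ∈ range (i:ℕ), (Polynomial.X + Polynomial.C ((t : K) + 1 - (j:K)))).natDegree :=
                Polynomial.natDegree_mul_le
            _ ≤ (i : ℕ) := by rw [Polynomial.natDegree_C, ffpoly_natDegree]; omega
            _ < (i₀ : ℕ) := hlt
        · rw [hmax i hgt]
          simp
      · rw [if_neg hcond]
        exact Polynomial.coeff_zero _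
    · intro h; exact absurd (Finset.mem_univ i₀) h
  have hQne : Q k₀ ≠ 0 := by
    intro h0
    rw [h0, Polynomial.coeff_zero] at hQc
    exact hc hQc.symm
  -- assemble
  refine ⟨m + J, fun k => (Q k).comp (Polynomial.X + Polynomial.C (J:K)), ⟨k₀, by omega, ?_⟩, ?_⟩
  · intro h0
    apply hQne
    have hXc : (Polynomial.X + Polynomial.C (J:K)).comp (Polynomial.X - Polynomial.C (J:K)) = Polynomial.X := by
      simp [Polynomial.add_comp]
    calc Q k₀ = (Q k₀).comp ((Polynomial.X + Polynomial.C (J:K)).comp (Polynomial.X - Polynomial.C (J:K))) := by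
          rw [hXc, Polynomial.comp_X]
      _ = ((Q k₀).comp (Polynomial.X + Polynomial.C (J:K))).comp (Polynomial.X - Polynomial.C (J:K)) := by
          rw [Polynomial.comp_assoc]
      _ = 0 := by
          rw [show (Q k₀).comp (Polynomial.X + Polynomial.C (J:K)) = 0 from h0, Polynomial.zero_comp]
  · intro n
    have hev : ∀ k, ((Q k).comp (Polynomial.X + Polynomial.C (J:K))).eval (n : K) = (Q k).eval ((n:K) + J) := by
      intro k
      rw [Polynomial.eval_comp, Polynomial.eval_add, Polynomial.eval_X, Polynomial.eval_C]
    calc ∑ k ∈ range (m + J + 1), ((Q k).comp (Polynomial.X + Polynomial.C (J:K))).eval (n : K) * a (n + k)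
        = ∑ k ∈ range (m + J + 1), (Q k).eval ((n:K) + J) * a (n + k) := by
          exact Finset.sum_congr rfl fun k _ => by rw [hev]
      _ = F (n + J) := hrec n
      _ = 0 := hF0 _

end Step1


section Step2
variable {K : Type*} [Field K] [CharZero K]

/-- version with nonzero top coefficient -/
lemma PRecZ.top {a : ℤ → K} (h : PRecZ a) :
    ∃ (r : ℕ) (q : ℕ → Polynomial K), q r ≠ 0 ∧
      ∀ n : ℤ, ∑ k ∈ range (r + 1), (q k).eval (n : K) * a (n + k) = 0 := by
  classical
  obtain ⟨r, q, ⟨k₀, hk₀r, hk₀⟩, hrec⟩ := h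
  set r' := Nat.findGreatest (fun k => q k ≠ 0) r with hr'
  have hq' : q r' ≠ 0 := Nat.findGreatest_spec (P := fun k => q k ≠ 0) hk₀r hk₀
  have hr'le : r' ≤ r := Nat.findGreatest_le r
  refine ⟨r', q, hq', fun n => ?_⟩
  rw [← hrec n]
  apply Finset.sum_subset
  · exact Finset.range_subset_range.mpr (by omega)
  · intro k hk hk'
    rw [Finset.mem_range] at hk hk'
    have : q k = 0 := by
      by_contra hne
      have : k ≤ r' := Nat.le_findGreatest (by omega) hne
      omega
    rw [this, Polynomial.eval_zero, zero_mul]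

/-- germs at cofinite on ℤ -/
abbrev GermK (K : Type*) [Field K] := Filter.Germ (Filter.cofinite : Filter ℤ) K

/-- evaluation of a polynomial along `ℤ`, as a ring hom into functions -/
noncomputable def evalZ (K : Type*) [Field K] : Polynomial K →+* (ℤ → K) where
  toFun p := fun n => p.eval (n : K)
  map_one' := by funext n; simp
  map_mul' p q := by funext n; simp
  map_zero' := by funext n; simp
  map_add' p q := by funext n; simp

noncomputable def PhiG (K : Type*) [Field K] : Polynomial K →+* GermK K :=
  (Filter.Germ.coeRingHom _).comp (evalZ K)

lemma PhiG_apply (p : Polynomial K) : PhiG K p = ((fun n : ℤ => p.eval (n : K)) : GermK K) := rfl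

lemma eventually_eval_ne {p : Polynomial K} (hp : p ≠ 0) :
    ∀ᶠ n : ℤ in cofinite, p.eval (n : K) ≠ 0 := by
  rw [Filter.eventually_cofinite]
  have h1 : {x : K | p.IsRoot x}.Finite := p.finite_setOf_isRoot hp
  have h2 : {n : ℤ | ¬ p.eval (n:K) ≠ 0} ⊆ (fun n : ℤ => (n : K)) ⁻¹' {x : K | p.IsRoot x} := by
    intro n hn
    simp only [Set.mem_setOf_eq, not_not] at hn
    exact hn
  exact Set.Finite.subset (Set.Finite.preimage (Set.injOn_of_injective Int.cast_injective) h1) h2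

lemma PhiG_isUnit {p : Polynomial K} (hp : p ≠ 0) : IsUnit (PhiG K p) := by
  refine IsUnit.of_mul_eq_one (((fun n : ℤ => (p.eval (n : K))⁻¹) : GermK K)) ?_
  rw [PhiG_apply]
  rw [← Filter.Germ.coe_mul, ← Filter.Germ.coe_one]
  apply Filter.Germ.coe_eq.mpr
  filter_upwards [eventually_eval_ne hp] with n hn
  exact mul_inv_cancel₀ hn

noncomputable def PsiG (K : Type*) [Field K] [CharZero K] : RatFunc K →+* GermK K :=
  IsLocalization.lift (M := nonZeroDivisors (Polynomial K))
    (fun y => PhiG_isUnit (nonZeroDivisors.ne_zero y.2))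

lemma PsiG_algebraMap (p : Polynomial K) :
    PsiG K (algebraMap (Polynomial K) (RatFunc K) p) = PhiG K p :=
  IsLocalization.lift_eq _ p

end Step2

section Span
variable {K : Type*} [Field K] [CharZero K]

noncomputable def germAlg : Algebra (RatFunc K) (GermK K) := (PsiG K).toAlgebra

attribute [local instance] germAlg

lemma poly_smul (p : Polynomial K) (g : GermK K) :
    (algebraMap (Polynomial K) (RatFunc K) p) • g = PhiG K p * g := by
  rw [Algebra.smul_def]
  erw [RingHom.algebraMap_toAlgebra, PsiG_algebraMap]

lemma mem_of_poly_mul_mem {p : Polynomial K} (hp : p ≠ 0) {g : GermK K}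
    {W : Submodule (RatFunc K) (GermK K)} (h : PhiG K p * g ∈ W) : g ∈ W := by
  have h1 : algebraMap (Polynomial K) (RatFunc K) p ≠ 0 :=
    (map_ne_zero_iff _ (IsFractionRing.injective (Polynomial K) (RatFunc K))).mpr hp
  have h2 : g = (algebraMap (Polynomial K) (RatFunc K) p)⁻¹ • (PhiG K p * g) := by
    rw [← poly_smul, smul_smul, inv_mul_cancel₀ h1, one_smul]
  rw [h2]
  exact W.smul_mem _ h

/-- shift of a sequence -/
def shf {K : Type*} (a : ℤ → K) (k : ℕ) : ℤ → K := fun n => a (n + k)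

lemma comp_shift_ne_zero {p : Polynomial K} (hp : p ≠ 0) (c : K) :
    p.comp (Polynomial.X + Polynomial.C c) ≠ 0 := by
  intro h0
  apply hp
  have hXc : (Polynomial.X + Polynomial.C c).comp (Polynomial.X - Polynomial.C c) = Polynomial.X := by
    simp [Polynomial.add_comp]
  calc p = (p.comp ((Polynomial.X + Polynomial.C c).comp (Polynomial.X - Polynomial.C c))) := by
        rw [hXc, Polynomial.comp_X]
    _ = (p.comp (Polynomial.X + Polynomial.C c)).comp (Polynomial.X - Polynomial.C c) := by
        rw [Polynomial.comp_assoc]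
    _ = 0 := by rw [h0, Polynomial.zero_comp]

lemma shifts_mem_span {a : ℤ → K} (r : ℕ) (q : ℕ → Polynomial K) (hq : q r ≠ 0)
    (hrec : ∀ n : ℤ, ∑ k ∈ range (r + 1), (q k).eval (n : K) * a (n + k) = 0) :
    ∀ k : ℕ, ((shf a k : ℤ → K) : GermK K) ∈
      Submodule.span (RatFunc K) (Set.range (fun j : Fin r => ((shf a j : ℤ → K) : GermK K))) := by
  intro k
  induction k using Nat.strong_induction_on with
  | _ k ih =>
    rcases lt_or_ge k r with hk | hk
    · exact Submodule.subset_span ⟨⟨k, hk⟩, rfl⟩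
    · set s := k - r with hs
      set qq : ℕ → Polynomial K := fun t => (q t).comp (Polynomial.X + Polynomial.C (s:K)) with hqq
      have hpt : (fun n : ℤ => ∑ t ∈ range (r+1), (qq t).eval (n:K) * shf a (s+t) n)
          = (fun _ : ℤ => (0:K)) := by
        funext n
        rw [← hrec (n + s)]
        apply Finset.sum_congr rfl
        intro t _
        rw [hqq]
        rw [Polynomial.eval_comp, Polynomial.eval_add, Polynomial.eval_X, Polynomial.eval_C]
        congr 1
        · congr 1; push_cast; ring
        · show a (n + (s+t:ℕ)) = a (n + s + t); congr 1; push_cast; ring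
      have hg : ∑ t ∈ range (r+1), PhiG K (qq t) * ((shf a (s+t) : ℤ → K) : GermK K) = 0 := by
        have h1 : ∀ t, PhiG K (qq t) * ((shf a (s+t) : ℤ → K) : GermK K)
            = (((fun n : ℤ => (qq t).eval (n:K) * shf a (s+t) n) : ℤ → K) : GermK K) := by
          intro t
          rw [PhiG_apply, ← Filter.Germ.coe_mul]
          rfl
        rw [Finset.sum_congr rfl (fun t _ => h1 t)]
        have hco : ∀ f : ℤ → K, ((f : ℤ → K) : GermK K) = Filter.Germ.coeRingHom (cofinite : Filter ℤ) f :=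
          fun f => rfl
        rw [Finset.sum_congr rfl (fun t _ => hco _)]
        rw [← map_sum (Filter.Germ.coeRingHom (cofinite : Filter ℤ))
          (fun t => (fun n : ℤ => (qq t).eval (n:K) * shf a (s+t) n)) (range (r+1))]
        have h2 : (∑ t ∈ range (r+1), (fun n : ℤ => (qq t).eval (n:K) * shf a (s+t) n))
            = (fun _ : ℤ => (0:K)) := by
          rw [← hpt]; funext n; simp [Finset.sum_apply]
        rw [h2]
        exact map_zero (Filter.Germ.coeRingHom _)
      rw [Finset.sum_range_succ] at hg
      have htop : PhiG K (qq r) * ((shf a (s+r) : ℤ → K) : GermK K)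
          = - ∑ t ∈ range r, PhiG K (qq t) * ((shf a (s+t) : ℤ → K) : GermK K) :=
        eq_neg_of_add_eq_zero_right hg
      have hksr : k = s + r := by omega
      rw [hksr]
      apply mem_of_poly_mul_mem (comp_shift_ne_zero hq ((s:K)))
      rw [hqq] at htop
      rw [htop]
      apply Submodule.neg_mem
      apply Submodule.sum_mem
      intro t ht
      rw [Finset.mem_range] at ht
      rw [← poly_smul]
      apply Submodule.smul_mem
      exact ih (s + t) (by omega)

end Span

section Prod
variable {K : Type*} [Field K] [CharZero K]

attribute [local instance] germAlg

lemma prec_mul {a b : ℤ → K} (ha : PRecZ a) (hb : PRecZ b) :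
    PRecZ (fun n => a n * b n) := by
  classical
  obtain ⟨ra, qa, hqa, hra⟩ := ha.top
  obtain ⟨rb, qb, hqb, hrb⟩ := hb.top
  set N := ra * rb with hN
  set f : Fin ra × Fin rb → GermK K :=
    fun ij => ((shf a ij.1 : ℤ → K) : GermK K) * ((shf b ij.2 : ℤ → K) : GermK K) with hf
  set W := Submodule.span (RatFunc K) (Set.range f) with hW
  have hWfin : FiniteDimensional (RatFunc K) W :=
    FiniteDimensional.span_of_finite _ (Set.finite_range f)
  have hWrank : Module.finrank (RatFunc K) W ≤ N := by
    have := finrank_range_le_card (R := RatFunc K) f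
    rw [Set.finrank] at this
    simpa [hN, hW] using this
  set ab := fun n : ℤ => a n * b n with hab
  have hmem : ∀ k : ℕ, ((shf ab k : ℤ → K) : GermK K) ∈ W := by
    intro k
    have h1 : ((shf ab k : ℤ → K) : GermK K)
        = ((shf a k : ℤ→K) : GermK K) * ((shf b k : ℤ→K) : GermK K) := by
      rw [← Filter.Germ.coe_mul]; rfl
    rw [h1]
    have h2 := shifts_mem_span ra qa hqa hra k
    have h3 := shifts_mem_span rb qb hqb hrb k
    have h4 := Submodule.mul_mem_mul h2 h3
    rw [Submodule.span_mul_span] at h4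
    refine Submodule.span_mono ?_ h4
    intro x hx
    rw [Set.mem_mul] at hx
    obtain ⟨u, hu, v, hv, rfl⟩ := hx
    obtain ⟨i, rfl⟩ := hu
    obtain ⟨j, rfl⟩ := hv
    exact ⟨(i, j), rfl⟩
  -- the N+1 shifted germs are linearly dependent
  set v : Fin (N+1) → GermK K := fun k => ((shf ab k : ℤ → K) : GermK K) with hv
  have hdep : ¬ LinearIndependent (RatFunc K) v := by
    intro hli
    have h1 : Module.finrank (RatFunc K) (Submodule.span (RatFunc K) (Set.range v)) = N + 1 := by
      rw [finrank_span_eq_card hli, Fintype.card_fin]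
    have h2 : Submodule.span (RatFunc K) (Set.range v) ≤ W := by
      rw [Submodule.span_le]
      rintro x ⟨k, rfl⟩
      exact hmem k
    have := Submodule.finrank_mono h2
    omega
  rw [Fintype.not_linearIndependent_iff] at hdep
  obtain ⟨g, hgsum, k₁, hk₁⟩ := hdep
  -- clear denominators
  obtain ⟨d, hd⟩ := IsLocalization.exist_integer_multiples
    (nonZeroDivisors (Polynomial K)) Finset.univ g
  choose P hP using fun i : Fin (N+1) => hd i (Finset.mem_univ i)
  -- ∑ Φ(P k) * v k = 0
  have hPsum : ∑ k : Fin (N+1), PhiG K (P k) * v k = 0 := by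
    have h0 : ∑ k : Fin (N+1), (algebraMap (Polynomial K) (RatFunc K) (P k)) • v k
        = (algebraMap (Polynomial K) (RatFunc K) (d : Polynomial K)) • ∑ k : Fin (N+1), g k • v k := by
      rw [Finset.smul_sum]
      apply Finset.sum_congr rfl
      intro k _
      rw [hP k]
      rw [show ((d : Polynomial K) • g k) = algebraMap (Polynomial K) (RatFunc K) (d : Polynomial K) * g k
        from Algebra.smul_def _ _, mul_smul]
    rw [Finset.sum_congr rfl (fun k _ => (poly_smul (P k) (v k)).symm), h0, hgsum, smul_zero]
  -- P k₁ ≠ 0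
  have hPk₁ : P k₁ ≠ 0 := by
    intro h0
    have h1 := hP k₁
    rw [h0, map_zero] at h1
    have hd0 : algebraMap (Polynomial K) (RatFunc K) (d : Polynomial K) ≠ 0 :=
      (map_ne_zero_iff _ (IsFractionRing.injective (Polynomial K) (RatFunc K))).mpr
        (nonZeroDivisors.ne_zero d.2)
    rw [Algebra.smul_def] at h1
    rcases mul_eq_zero.mp h1.symm with h | h
    · exact hd0 h
    · exact hk₁ h
  -- translate germ identity to a cofinite statement
  have hgerm : (fun n : ℤ => ∑ k : Fin (N+1), (P k).eval (n:K) * ab (n + k)) =ᶠ[cofinite]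
      (fun _ : ℤ => (0:K)) := by
    have h1 : ∀ k : Fin (N+1), PhiG K (P k) * v k
        = (((fun n : ℤ => (P k).eval (n:K) * ab (n + k)) : ℤ → K) : GermK K) := by
      intro k
      rw [PhiG_apply, ← Filter.Germ.coe_mul]
      rfl
    rw [Finset.sum_congr rfl (fun k _ => h1 k)] at hPsum
    have hco : ∀ f : ℤ → K, ((f : ℤ → K) : GermK K) = Filter.Germ.coeRingHom (cofinite : Filter ℤ) f :=
      fun f => rfl
    rw [Finset.sum_congr rfl (fun k _ => hco _), ← map_sum] at hPsum
    have h2 : (Filter.Germ.coeRingHom (cofinite : Filter ℤ)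
        (∑ k : Fin (N+1), fun n : ℤ => (P k).eval (n:K) * ab (n + k)))
        = (((∑ k : Fin (N+1), fun n : ℤ => (P k).eval (n:K) * ab (n + k)) : ℤ → K) : GermK K) := rfl
    rw [h2] at hPsum
    have h3 := Filter.Germ.coe_eq.mp (by rw [hPsum]; rfl :
      (((∑ k : Fin (N+1), fun n : ℤ => (P k).eval (n:K) * ab (n + k)) : ℤ → K) : GermK K)
        = ((fun _ : ℤ => (0:K) : ℤ → K) : GermK K))
    filter_upwards [h3] with n hn
    simpa [Finset.sum_apply] using hn
  -- bad set
  set T : Set ℤ := {n : ℤ | ∑ k : Fin (N+1), (P k).eval (n:K) * ab (n + k) ≠ 0} with hT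
  have hTfin : T.Finite := by
    rw [Filter.eventuallyEq_iff_exists_mem] at hgerm
    obtain ⟨s, hs, hfs⟩ := hgerm
    rw [Filter.mem_cofinite] at hs
    apply hs.subset
    intro n hn
    simp only [hT, Set.mem_setOf_eq] at hn
    intro hns
    exact hn (hfs hns)
  set w : Polynomial K := ∏ t ∈ hTfin.toFinset, (Polynomial.X - Polynomial.C (t:K)) with hw
  have hwne : w ≠ 0 := by
    rw [hw]
    apply Finset.prod_ne_zero_iff.mpr
    intro t _
    exact Polynomial.X_sub_C_ne_zero (t:K)
  -- assemble the recurrence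
  refine ⟨N, fun k => if h : k < N + 1 then w * P ⟨k, h⟩ else 0, ⟨k₁, by omega, ?_⟩, ?_⟩
  · show (if h : (k₁:ℕ) < N + 1 then w * P ⟨k₁, h⟩ else 0) ≠ 0
    rw [dif_pos (by omega : (k₁ : ℕ) < N + 1)]
    simp only [Fin.eta]
    exact mul_ne_zero hwne hPk₁
  · intro n
    have hsum : ∑ k ∈ range (N + 1),
        (if h : k < N + 1 then w * P ⟨k, h⟩ else 0).eval (n : K) * ab (n + k)
        = w.eval (n:K) * ∑ k : Fin (N+1), (P k).eval (n:K) * ab (n + k) := by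
      rw [Finset.mul_sum, Finset.sum_range]
      apply Finset.sum_congr rfl
      intro k _
      rw [dif_pos k.2, Fin.eta, Polynomial.eval_mul]
      ring
    rw [hsum]
    by_cases hn : n ∈ T
    · have : w.eval (n:K) = 0 := by
        rw [hw, Polynomial.eval_prod]
        apply Finset.prod_eq_zero (Set.Finite.mem_toFinset hTfin |>.mpr hn)
        simp
      rw [this, zero_mul]
    · have : ∑ k : Fin (N+1), (P k).eval (n:K) * ab (n + k) = 0 := by
        by_contra h0
        exact hn h0
      rw [this, mul_zero]

end Prod

section Step3
variable {K : Type*} [Field K] [CharZero K]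

/-- falling factorial polynomial `x(x-1)⋯(x-i+1)` -/
noncomputable def ffp (K : Type*) [Field K] (i : ℕ) : Polynomial K :=
  ∏ t ∈ range i, (Polynomial.X - Polynomial.C (t:K))

lemma ffp_monic (i : ℕ) : (ffp K i).Monic :=
  monic_prod_of_monic _ _ fun t _ => monic_X_sub_C _

lemma ffp_natDegree (i : ℕ) : (ffp K i).natDegree = i := by
  rw [ffp, Polynomial.natDegree_prod (f := fun t : ℕ => Polynomial.X - Polynomial.C (t:K))
    _ (fun t _ => (monic_X_sub_C ((t:K))).ne_zero)]
  rw [Finset.sum_congr rfl (fun t (_ : t ∈ range i) => Polynomial.natDegree_X_sub_C (t:K)),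
    Finset.sum_const, Finset.card_range, smul_eq_mul, mul_one]

lemma ffp_eval (i : ℕ) (x : K) : (ffp K i).eval x = ∏ t ∈ range i, (x - t) := by
  rw [ffp, Polynomial.eval_prod]
  simp

lemma ffExpand : ∀ (d : ℕ) (f : Polynomial K), f.natDegree ≤ d →
    ∃ α : ℕ → K, f = ∑ i ∈ range (d+1), Polynomial.C (α i) * ffp K i := by
  intro d
  induction d with
  | zero =>
    intro f hf
    refine ⟨fun _ => f.coeff 0, ?_⟩
    rw [Finset.sum_range_one, show ffp K 0 = 1 from rfl, mul_one]
    exact Polynomial.eq_C_of_natDegree_le_zero hf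
  | succ d ih =>
    intro f hf
    set g := f - Polynomial.C (f.coeff (d+1)) * ffp K (d+1) with hg
    have hffc : (ffp K (d+1)).coeff (d+1) = 1 := by
      have := (ffp_monic (K := K) (d+1)).coeff_natDegree
      rwa [ffp_natDegree] at this
    have hgdeg : g.natDegree ≤ d := by
      apply Polynomial.natDegree_le_iff_coeff_eq_zero.mpr
      intro m hm
      rw [hg, Polynomial.coeff_sub, Polynomial.coeff_C_mul]
      rcases Nat.lt_or_ge (d+1) m with h | h
      · have e1 : f.coeff m = 0 := Polynomial.coeff_eq_zero_of_natDegree_lt (lt_of_le_of_lt hf h)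
        have e2 : (ffp K (d+1)).coeff m = 0 := Polynomial.coeff_eq_zero_of_natDegree_lt
          (by rw [ffp_natDegree (K := K) (d+1)]; omega)
        rw [e1, e2]
        ring
      · have hm1 : m = d+1 := by omega
        rw [hm1, hffc, mul_one, sub_self]
    obtain ⟨α, hα⟩ := ih g hgdeg
    refine ⟨Function.update α (d+1) (f.coeff (d+1)), ?_⟩
    rw [Finset.sum_range_succ, Function.update_self]
    have heq : ∑ i ∈ range (d+1), Polynomial.C (Function.update α (d+1) (f.coeff (d+1)) i) * ffp K i
        = ∑ i ∈ range (d+1), Polynomial.C (α i) * ffp K i := by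
      apply Finset.sum_congr rfl
      intro i hi
      rw [Finset.mem_range] at hi
      rw [Function.update_of_ne (by omega)]
    rw [heq, ← hα, hg]
    ring

lemma coeff_CXpow_mul (a : K) (e n : ℕ) (f : PowerSeries K) :
    PowerSeries.coeff n (((Polynomial.C a * Polynomial.X ^ e : Polynomial K) : PowerSeries K) * f)
      = a * (if e ≤ n then PowerSeries.coeff (n - e) f else 0) := by
  have h1 : ((Polynomial.C a * Polynomial.X ^ e : Polynomial K) : PowerSeries K)
      = PowerSeries.C a * (PowerSeries.X : PowerSeries K) ^ e := by
    rw [Polynomial.coe_mul, Polynomial.coe_C, Polynomial.coe_pow, Polynomial.coe_X]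
  rw [h1, mul_assoc]
  rw [show (PowerSeries.C a) * ((PowerSeries.X : PowerSeries K) ^ e * f)
    = a • ((PowerSeries.X : PowerSeries K) ^ e * f) by rw [PowerSeries.smul_eq_C_mul]]
  rw [map_smul, PowerSeries.coeff_X_pow_mul', smul_eq_mul]

lemma dfinite_of_prec (Cs : PowerSeries K) (h : PRecZ (extCoeff Cs)) : IsDFinitePS Cs := by
  classical
  obtain ⟨r, q, ⟨k₁, hk₁r, hk₁⟩, hrec⟩ := h
  set c := extCoeff Cs with hcdef
  have hc0 : ∀ n < 0, c n = 0 := fun n hn => extCoeff_neg Cs hn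
  set qt : ℕ → Polynomial K := fun k => (q k).comp (Polynomial.X - Polynomial.C (k:K)) with hqt
  set D := (range (r+1)).sup (fun k => (qt k).natDegree) with hD
  have hexp : ∀ k : ℕ, k ∈ range (r+1) →
      ∃ α : ℕ → K, qt k = ∑ i ∈ range (D+1), Polynomial.C (α i) * ffp K i := by
    intro k hk
    exact ffExpand D (qt k) (Finset.le_sup (f := fun k => (qt k).natDegree) hk)
  choose! α hα using hexp
  set p : Fin (D+1) → Polynomial K :=
    fun i => ∑ k ∈ range (r+1), Polynomial.C (α k (i:ℕ)) * Polynomial.X ^ (r - k + (i:ℕ)) with hp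
  -- nontriviality
  have hαne : ∃ k ∈ range (r+1), ∃ i ∈ range (D+1), α k i ≠ 0 := by
    by_contra h0
    push_neg at h0
    apply hk₁
    have hqt0 : qt k₁ = 0 := by
      rw [hα k₁ (Finset.mem_range.mpr (by omega))]
      apply Finset.sum_eq_zero
      intro i hi
      rw [h0 k₁ (Finset.mem_range.mpr (by omega)) i hi, map_zero, zero_mul]
    have hXc : (Polynomial.X - Polynomial.C ((k₁:ℕ):K)).comp (Polynomial.X + Polynomial.C ((k₁:ℕ):K))
        = Polynomial.X := by
      simp [Polynomial.sub_comp]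
    calc q k₁ = (q k₁).comp ((Polynomial.X - Polynomial.C ((k₁:ℕ):K)).comp
          (Polynomial.X + Polynomial.C ((k₁:ℕ):K))) := by rw [hXc, Polynomial.comp_X]
      _ = (qt k₁).comp (Polynomial.X + Polynomial.C ((k₁:ℕ):K)) := by
          rw [hqt, Polynomial.comp_assoc]
      _ = 0 := by rw [hqt0, Polynomial.zero_comp]
  obtain ⟨k₀, hk₀, i₀, hi₀, hαk₀⟩ := hαne
  rw [Finset.mem_range] at hk₀ hi₀
  have hpne : p ⟨i₀, by omega⟩ ≠ 0 := by
    intro h0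
    apply hαk₀
    have hco : (p ⟨i₀, by omega⟩).coeff (r - k₀ + i₀) = α k₀ i₀ := by
      rw [hp]
      simp only []
      rw [Polynomial.finset_sum_coeff]
      rw [Finset.sum_eq_single k₀]
      · rw [Polynomial.coeff_C_mul, Polynomial.coeff_X_pow, if_pos rfl, mul_one]
      · intro k hk hkne
        rw [Finset.mem_range] at hk
        rw [Polynomial.coeff_C_mul, Polynomial.coeff_X_pow, if_neg (by omega), mul_zero]
      · intro hmem
        exact absurd (Finset.mem_range.mpr (by omega)) hmem
    rw [h0, Polynomial.coeff_zero] at hco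
    exact hco.symm
  refine ⟨D, p, ⟨⟨i₀, by omega⟩, hpne⟩, ?_⟩
  ext n
  rw [map_sum, map_zero]
  -- coefficient computation
  have hterm : ∀ i : Fin (D+1), PowerSeries.coeff n ((p i : PowerSeries K) * (⇑(PowerSeries.derivative K))^[(i:ℕ)] Cs)
      = ∑ k ∈ range (r+1), α k (i:ℕ) *
        ((∏ t ∈ range (i:ℕ), (((n:ℤ):K) - (r - k + (i:ℕ) : ℕ) + t + 1)) * c ((n:ℤ) - (r - k + (i:ℕ) : ℕ) + (i:ℕ))) := by
    intro i
    have hcast : ((p i : Polynomial K) : PowerSeries K)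
        = ∑ k ∈ range (r+1), ((Polynomial.C (α k (i:ℕ)) * Polynomial.X ^ (r - k + (i:ℕ)) : Polynomial K) : PowerSeries K) := by
      rw [hp]
      simp only []
      rw [← Polynomial.coeToPowerSeries.ringHom_apply, map_sum]
      apply Finset.sum_congr rfl
      intro k _
      rw [Polynomial.coeToPowerSeries.ringHom_apply]
    rw [hcast, Finset.sum_mul, map_sum]
    apply Finset.sum_congr rfl
    intro k hk
    rw [Finset.mem_range] at hk
    rw [coeff_CXpow_mul]
    set e := r - k + (i:ℕ) with he
    by_cases hen : e ≤ n
    · rw [if_pos hen, coeff_iter_derivative]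
      congr 1
      have harg : ((n:ℤ) - (e:ℕ) + (i:ℕ)) = ((n - e + (i:ℕ) : ℕ) : ℤ) := by push_cast; omega
      have h2 : c ((n:ℤ) - (e:ℕ) + (i:ℕ)) = PowerSeries.coeff (n - e + (i:ℕ)) Cs := by
        rw [harg, hcdef, extCoeff_ofNat]
      rw [h2]
      have h3 : ∀ t ∈ range (i:ℕ), ((n - e : ℕ) : K) + (t:K) + 1 = ((n:ℤ):K) - (e:K) + t + 1 := by
        intro t _
        have : ((n - e : ℕ) : ℤ) = (n:ℤ) - e := by omega
        have h4 : ((n - e : ℕ) : K) = ((n:ℤ):K) - (e:K) := by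
          rw [show ((n - e : ℕ) : K) = (((n - e : ℕ) : ℤ) : K) by push_cast; ring, this]
          push_cast; ring
        rw [h4]
      rw [Finset.prod_congr rfl h3]
      ring
    · rw [if_neg hen, mul_zero]
      rw [term_vanish c hc0 (i:ℕ) e (n:ℤ) (by omega), mul_zero]
  rw [Finset.sum_congr rfl (fun i _ => hterm i)]
  -- now the scalar identity from the recurrence
  rw [Finset.sum_comm]
  have hout : ∀ k ∈ range (r+1), ∑ i : Fin (D+1), α k (i:ℕ) *
      ((∏ t ∈ range (i:ℕ), (((n:ℤ):K) - (r - k + (i:ℕ) : ℕ) + t + 1)) * c ((n:ℤ) - (r - k + (i:ℕ) : ℕ) + (i:ℕ)))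
      = (q k).eval (((n:ℤ) - r : ℤ) : K) * c ((n:ℤ) - r + k) := by
    intro k hk
    rw [Finset.mem_range] at hk
    set x : K := ((n:ℤ):K) - ((r - k : ℕ) : K) with hx
    have hprod : ∀ i : Fin (D+1), (∏ t ∈ range (i:ℕ), (((n:ℤ):K) - (r - k + (i:ℕ) : ℕ) + t + 1))
        = (ffp K (i:ℕ)).eval x := by
      intro i
      rw [ffp_eval]
      rw [← Finset.prod_range_reflect (fun t => x - (t:K)) (i:ℕ)]
      apply Finset.prod_congr rfl
      intro t ht
      rw [Finset.mem_range] at ht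
      have hcast : (((i:ℕ) - 1 - t : ℕ) : K) = ((i:ℕ):K) - 1 - (t:K) := by
        have : (((i:ℕ) - 1 - t : ℕ) : ℤ) = ((i:ℕ):ℤ) - 1 - t := by omega
        rw [show (((i:ℕ) - 1 - t : ℕ) : K) = ((((i:ℕ) - 1 - t : ℕ) : ℤ) : K) by push_cast; ring, this]
        push_cast; ring
      rw [hcast]
      have hecast : ((r - k + (i:ℕ) : ℕ) : K) = ((r - k : ℕ) : K) + ((i:ℕ):K) := by push_cast; ring
      rw [hecast, hx]
      ring
    have hcarg : ∀ i : Fin (D+1), ((n:ℤ) - (r - k + (i:ℕ) : ℕ) + (i:ℕ)) = (n:ℤ) - r + k := by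
      intro i; push_cast; omega
    calc ∑ i : Fin (D+1), α k (i:ℕ) *
          ((∏ t ∈ range (i:ℕ), (((n:ℤ):K) - (r - k + (i:ℕ) : ℕ) + t + 1)) * c ((n:ℤ) - (r - k + (i:ℕ) : ℕ) + (i:ℕ)))
        = ∑ i : Fin (D+1), α k (i:ℕ) * ((ffp K (i:ℕ)).eval x * c ((n:ℤ) - r + k)) := by
          apply Finset.sum_congr rfl
          intro i _
          rw [hprod i, hcarg i]
      _ = (∑ i : Fin (D+1), α k (i:ℕ) * (ffp K (i:ℕ)).eval x) * c ((n:ℤ) - r + k) := by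
          rw [Finset.sum_mul]
          apply Finset.sum_congr rfl
          intro i _
          ring
      _ = (q k).eval (((n:ℤ) - r : ℤ) : K) * c ((n:ℤ) - r + k) := by
          congr 1
          have h5 : (qt k).eval x = ∑ i ∈ range (D+1), α k i * (ffp K i).eval x := by
            rw [hα k (Finset.mem_range.mpr (by omega)), Polynomial.eval_finset_sum]
            apply Finset.sum_congr rfl
            intro i _
            rw [Polynomial.eval_mul, Polynomial.eval_C]
          have h6 : ∑ i : Fin (D+1), α k (i:ℕ) * (ffp K (i:ℕ)).eval x
              = ∑ i ∈ range (D+1), α k i * (ffp K i).eval x := by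
            rw [Finset.sum_range]
          rw [h6, ← h5, hqt]
          rw [Polynomial.eval_comp, Polynomial.eval_sub, Polynomial.eval_X, Polynomial.eval_C]
          congr 1
          rw [hx]
          have : ((r - k : ℕ) : K) = (r:K) - (k:K) := by
            rw [show ((r - k : ℕ) : K) = (((r - k : ℕ) : ℤ) : K) by push_cast; ring,
              show ((r - k : ℕ) : ℤ) = (r:ℤ) - k by omega]
            push_cast; ring
          rw [this]
          push_cast
          ring
  rw [Finset.sum_congr rfl hout]
  exact hrec ((n:ℤ) - r)

end Step3

end

/-- Over a field of characteristic zero, the Hadamard product of two D-finite power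
series is D-finite. -/
theorem isDFinite_hadamardMul {K : Type*} [Field K] [CharZero K]
    (A B : PowerSeries K) (hA : IsDFinitePS A) (hB : IsDFinitePS B) :
    IsDFinitePS (hadamardMul A B) := by
  apply dfinite_of_prec
  have h : extCoeff (hadamardMul A B) = fun n => extCoeff A n * extCoeff B n :=
    funext (extCoeff_hadamard A B)
  rw [h]
  exact prec_mul (prec_of_dfinite A hA) (prec_of_dfinite B hB)
end

section
/- (Jungen) Let A, B ∈ ℂ⟦z⟧ be formal power series. If A is rational and B is algebraic over ℂ(z), then the Hadamard product A * B is algebraic over ℂ(z). -/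
open PowerSeries

set_option synthInstance.maxHeartbeats 1000000
set_option maxHeartbeats 1000000

noncomputable section JungenAux

lemma algebraMap_poly_ps_eq (p : Polynomial ℂ) :
    algebraMap (Polynomial ℂ) (PowerSeries ℂ) p = (p : PowerSeries ℂ) := by
  rw [PowerSeries.algebraMap_apply', Algebra.algebraMap_self, PowerSeries.map_id, id_eq]

lemma algebraMap_poly_ps_eq' :
    algebraMap (Polynomial ℂ) (PowerSeries ℂ) = Polynomial.coeToPowerSeries.ringHom :=
  RingHom.ext algebraMap_poly_ps_eq

section FieldSide

abbrev FF := FractionRing (PowerSeries ℂ)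

lemma injective_algebraMap_poly_FF :
    Function.Injective (algebraMap (Polynomial ℂ) FF) := by
  rw [IsScalarTower.algebraMap_eq (Polynomial ℂ) (PowerSeries ℂ) FF]
  have h1 : Function.Injective (algebraMap (PowerSeries ℂ) FF) :=
    IsFractionRing.injective _ _
  have h2 : Function.Injective (algebraMap (Polynomial ℂ) (PowerSeries ℂ)) := by
    rw [algebraMap_poly_ps_eq']
    exact Polynomial.coe_injective ℂ
  exact fun a b hab => h2 (h1 hab)

def liftRF : RatFunc ℂ →+* FF := IsFractionRing.lift injective_algebraMap_poly_FF

local instance instAlgRatFuncFF : Algebra (RatFunc ℂ) FF := liftRF.toAlgebra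

local instance instTowerPolyRatFuncFF : IsScalarTower (Polynomial ℂ) (RatFunc ℂ) FF :=
  IsScalarTower.of_algebraMap_eq fun x =>
    (IsFractionRing.lift_algebraMap injective_algebraMap_poly_FF x).symm

lemma isAlgebraicPS_iff_isIntegral_FF {f : PowerSeries ℂ} :
    IsAlgebraicPS f ↔ IsIntegral (RatFunc ℂ) (algebraMap (PowerSeries ℂ) FF f) := by
  rw [← isAlgebraic_iff_isIntegral]
  have h1 : IsAlgebraicPS f ↔ IsAlgebraic (Polynomial ℂ) f := by
    unfold IsAlgebraicPS IsAlgebraic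
    simp_rw [Polynomial.aeval_def, algebraMap_poly_ps_eq']
  rw [h1,
    ← isAlgebraic_algebraMap_iff (A := FF) (IsFractionRing.injective (PowerSeries ℂ) FF)]
  exact IsFractionRing.isAlgebraic_iff (Polynomial ℂ) (RatFunc ℂ) FF


lemma isAlgebraicPS_coe (p : Polynomial ℂ) : IsAlgebraicPS (p : PowerSeries ℂ) := by
  refine ⟨Polynomial.X - Polynomial.C p, Polynomial.X_sub_C_ne_zero p, ?_⟩
  simp [Polynomial.eval₂_sub, Polynomial.eval₂_X, Polynomial.eval₂_C,
    Polynomial.coeToPowerSeries.ringHom_apply]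

lemma IsAlgebraicPS.addPS {f g : PowerSeries ℂ} (hf : IsAlgebraicPS f) (hg : IsAlgebraicPS g) :
    IsAlgebraicPS (f + g) := by
  rw [isAlgebraicPS_iff_isIntegral_FF] at hf hg ⊢
  rw [map_add]
  exact hf.add hg

lemma IsAlgebraicPS.mulPS {f g : PowerSeries ℂ} (hf : IsAlgebraicPS f) (hg : IsAlgebraicPS g) :
    IsAlgebraicPS (f * g) := by
  rw [isAlgebraicPS_iff_isIntegral_FF] at hf hg ⊢
  rw [map_mul]
  exact hf.mul hg

lemma IsAlgebraicPS.eval₂PS {f : PowerSeries ℂ} (hf : IsAlgebraicPS f)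
    (Q : Polynomial (Polynomial ℂ)) :
    IsAlgebraicPS (Polynomial.eval₂ Polynomial.coeToPowerSeries.ringHom f Q) := by
  rw [isAlgebraicPS_iff_isIntegral_FF] at hf ⊢
  have h1 : Polynomial.eval₂ Polynomial.coeToPowerSeries.ringHom f Q = Polynomial.aeval f Q := by
    rw [Polynomial.aeval_def, algebraMap_poly_ps_eq']
  have h2 : (algebraMap (PowerSeries ℂ) FF) ((Polynomial.aeval f) Q)
      = Polynomial.aeval (algebraMap (PowerSeries ℂ) FF f) Q :=
    (Polynomial.aeval_algHom_apply (IsScalarTower.toAlgHom (Polynomial ℂ)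
      (PowerSeries ℂ) FF) f Q).symm
  rw [h1, h2]
  set x := algebraMap (PowerSeries ℂ) FF f
  rw [← Polynomial.aeval_map_algebraMap (RatFunc ℂ) x Q]
  exact .of_mem_of_fg _ hf.fg_adjoin_singleton _ (Polynomial.aeval_mem_adjoin_singleton _ _)


section DerivRescale

local notation "φps" => (Polynomial.coeToPowerSeries.ringHom : Polynomial ℂ →+* PowerSeries ℂ)

lemma derivative_eval₂ (f : PowerSeries ℂ) (P : Polynomial (Polynomial ℂ)) :
    ∃ Pz : Polynomial (Polynomial ℂ),
      PowerSeries.derivative ℂ (Polynomial.eval₂ φps f P)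
        = Polynomial.eval₂ φps f Pz
          + Polynomial.eval₂ φps f (Polynomial.derivative P) * PowerSeries.derivative ℂ f := by
  induction P using Polynomial.induction_on' with
  | add p q hp hq =>
    obtain ⟨Pz, hPz⟩ := hp; obtain ⟨Qz, hQz⟩ := hq
    refine ⟨Pz + Qz, ?_⟩
    rw [Polynomial.eval₂_add, map_add, hPz, hQz, map_add, Polynomial.eval₂_add,
      Polynomial.eval₂_add]
    ring
  | monomial n a =>
    refine ⟨Polynomial.monomial n (Polynomial.derivative a), ?_⟩
    rw [Polynomial.eval₂_monomial, Polynomial.derivative_monomial, Polynomial.eval₂_monomial,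
      Polynomial.eval₂_monomial]
    rw [Derivation.leibniz, Derivation.leibniz_pow, smul_eq_mul, smul_eq_mul, smul_eq_mul]
    simp only [Polynomial.coeToPowerSeries.ringHom_apply, PowerSeries.derivative_coe,
      Polynomial.coe_mul]
    have hn : ((n : Polynomial ℂ) : PowerSeries ℂ) = (n : PowerSeries ℂ) := by
      rw [← Polynomial.coeToPowerSeries.ringHom_apply, map_natCast]
    rw [hn]
    ring

lemma IsAlgebraicPS.derivativePS {f : PowerSeries ℂ} (hf : IsAlgebraicPS f) :
    IsAlgebraicPS (PowerSeries.derivative ℂ f) := by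
  classical
  set S : Set ℕ := {n | ∃ P : Polynomial (Polynomial ℂ), P ≠ 0 ∧
      Polynomial.eval₂ φps f P = 0 ∧ P.natDegree = n} with hS
  have hSne : S.Nonempty := by
    obtain ⟨P, h0, hP⟩ := hf; exact ⟨P.natDegree, P, h0, hP, rfl⟩
  obtain ⟨P, hP0, hPf, hPdeg⟩ := Nat.sInf_mem hSne
  have hmin : ∀ Q : Polynomial (Polynomial ℂ), Q ≠ 0 → Polynomial.eval₂ φps f Q = 0 →
      P.natDegree ≤ Q.natDegree := by
    intro Q h1 h2
    rw [hPdeg]; exact Nat.sInf_le ⟨Q, h1, h2, rfl⟩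
  have hd0 : P.natDegree ≠ 0 := by
    intro h
    have ha := Polynomial.eq_C_of_natDegree_eq_zero h
    rw [ha, Polynomial.eval₂_C] at hPf
    have h2 : P.coeff 0 = 0 := by
      rw [← Polynomial.coe_eq_zero_iff (R := ℂ)]
      exact hPf
    exact hP0 (by rw [ha, h2, map_zero])
  have hPd : Polynomial.derivative P ≠ 0 := fun h =>
    hd0 (Polynomial.natDegree_eq_zero_of_derivative_eq_zero h)
  have hg : Polynomial.eval₂ φps f (Polynomial.derivative P) ≠ 0 := fun h =>
    absurd (hmin _ hPd h) (not_le.mpr (Polynomial.natDegree_derivative_lt hd0))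
  obtain ⟨Pz, hPz⟩ := derivative_eval₂ f P
  rw [hPf, map_zero] at hPz
  -- 0 = eval₂ Pz + g * Df
  have key : Polynomial.eval₂ φps f (Polynomial.derivative P) * PowerSeries.derivative ℂ f
      = - Polynomial.eval₂ φps f Pz := by linear_combination -hPz
  have hgI := (isAlgebraicPS_iff_isIntegral_FF).mp (hf.eval₂PS (Polynomial.derivative P))
  have hhI := (isAlgebraicPS_iff_isIntegral_FF).mp (hf.eval₂PS Pz)
  rw [isAlgebraicPS_iff_isIntegral_FF]
  have hinj : Function.Injective (algebraMap (PowerSeries ℂ) FF) :=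
    IsFractionRing.injective _ _
  have hg' : algebraMap (PowerSeries ℂ) FF (Polynomial.eval₂ φps f (Polynomial.derivative P)) ≠ 0 := by
    intro h; exact hg (hinj (by rw [h, map_zero]))
  have heq : algebraMap (PowerSeries ℂ) FF (PowerSeries.derivative ℂ f)
      = (algebraMap (PowerSeries ℂ) FF (Polynomial.eval₂ φps f (Polynomial.derivative P)))⁻¹
        * (- algebraMap (PowerSeries ℂ) FF (Polynomial.eval₂ φps f Pz)) := by
    rw [← map_neg, ← key, map_mul, inv_mul_cancel_left₀ hg']
  rw [heq]
  exact (hgI.inv).mul hhI.neg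

def ρρ (α : ℂ) : Polynomial ℂ →+* Polynomial ℂ :=
  Polynomial.eval₂RingHom Polynomial.C (Polynomial.C α * Polynomial.X)

lemma coe_ρρ (α : ℂ) :
    RingHom.comp φps (ρρ α) = RingHom.comp (rescale α) φps := by
  apply Polynomial.ringHom_ext
  · intro a
    rw [RingHom.comp_apply, RingHom.comp_apply]
    have h1 : ρρ α (Polynomial.C a) = Polynomial.C a := Polynomial.eval₂_C _ _
    rw [h1]
    ext m
    simp only [Polynomial.coeToPowerSeries.ringHom_apply, Polynomial.coe_C,
      PowerSeries.coeff_rescale, PowerSeries.coeff_C]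
    split_ifs with h
    · rw [h, pow_zero, one_mul]
    · rw [mul_zero]
  · rw [RingHom.comp_apply, RingHom.comp_apply]
    have h1 : ρρ α Polynomial.X = Polynomial.C α * Polynomial.X := Polynomial.eval₂_X _ _
    rw [h1]
    simp only [Polynomial.coeToPowerSeries.ringHom_apply, Polynomial.coe_mul, Polynomial.coe_C,
      Polynomial.coe_X, PowerSeries.rescale_X]

lemma ρρ_injective {α : ℂ} (hα : α ≠ 0) : Function.Injective (ρρ α) := by
  have hcomp : (ρρ α⁻¹).comp (ρρ α) = RingHom.id (Polynomial ℂ) := by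
    apply Polynomial.ringHom_ext
    · intro a
      simp only [RingHom.comp_apply, RingHom.id_apply, ρρ, Polynomial.coe_eval₂RingHom,
        Polynomial.eval₂_C]
    · simp only [RingHom.comp_apply, RingHom.id_apply, ρρ, Polynomial.coe_eval₂RingHom,
        Polynomial.eval₂_X, Polynomial.eval₂_mul, Polynomial.eval₂_C]
      rw [← mul_assoc, ← Polynomial.C_mul, mul_inv_cancel₀ hα, Polynomial.C_1, one_mul]
  intro a b hab
  have h2 := congrArg (ρρ α⁻¹) hab
  rwa [← RingHom.comp_apply, ← RingHom.comp_apply, hcomp, RingHom.id_apply,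
    RingHom.id_apply] at h2

lemma IsAlgebraicPS.rescalePS {f : PowerSeries ℂ} (α : ℂ) (hf : IsAlgebraicPS f) :
    IsAlgebraicPS (rescale α f) := by
  rcases eq_or_ne α 0 with rfl | hα
  · rw [PowerSeries.rescale_zero]
    show IsAlgebraicPS ((PowerSeries.C) ((constantCoeff) f))
    have h2 : (PowerSeries.C) ((constantCoeff) f)
        = ((Polynomial.C ((constantCoeff) f) : Polynomial ℂ) : PowerSeries ℂ) :=
      (Polynomial.coe_C _).symm
    rw [h2]
    exact isAlgebraicPS_coe _
  · obtain ⟨P, h0, hP⟩ := hf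
    refine ⟨P.map (ρρ α), ?_, ?_⟩
    · rwa [Ne, Polynomial.map_eq_zero_iff (ρρ_injective hα)]
    · rw [Polynomial.eval₂_map, coe_ρρ, ← Polynomial.hom_eval₂, hP, map_zero]

end DerivRescale

end FieldSide

section Hadamard

lemma IsAlgebraicPS.smulPS {f : PowerSeries ℂ} (c : ℂ) (hf : IsAlgebraicPS f) :
    IsAlgebraicPS (c • f) := by
  rw [PowerSeries.smul_eq_C_mul]
  have h2 : (PowerSeries.C c) = ((Polynomial.C c : Polynomial ℂ) : PowerSeries ℂ) :=
    (Polynomial.coe_C _).symm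
  rw [h2]
  exact (isAlgebraicPS_coe _).mulPS hf

/-- the power series `(1 - α X)^{-(k+1)}`. -/
def Sser (α : ℂ) (k : ℕ) : PowerSeries ℂ :=
  PowerSeries.mk fun n => (((n + k).choose k : ℕ) : ℂ) * α ^ n

lemma hadamardMul_add_left (A₁ A₂ B : PowerSeries ℂ) :
    hadamardMul (A₁ + A₂) B = hadamardMul A₁ B + hadamardMul A₂ B := by
  ext n
  simp [hadamardMul, add_mul]

lemma hadamardMul_smul_left (c : ℂ) (A B : PowerSeries ℂ) :
    hadamardMul (c • A) B = c • hadamardMul A B := by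
  ext n
  simp [hadamardMul, PowerSeries.coeff_smul, smul_eq_mul, mul_assoc]

lemma eq_poly_of_coeff_eventually_zero {f : PowerSeries ℂ} {N : ℕ}
    (h : ∀ n, N ≤ n → coeff n f = 0) : ∃ p : Polynomial ℂ, f = (p : PowerSeries ℂ) := by
  refine ⟨PowerSeries.trunc N f, ?_⟩
  ext m
  rw [Polynomial.coeff_coe, PowerSeries.coeff_trunc]
  split_ifs with hm
  · rfl
  · exact h m (not_lt.mp hm)

def GoodPS (A : PowerSeries ℂ) : Prop :=
  ∀ B : PowerSeries ℂ, IsAlgebraicPS B → IsAlgebraicPS (hadamardMul A B)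

lemma GoodPS.addPS {A₁ A₂ : PowerSeries ℂ} (h₁ : GoodPS A₁) (h₂ : GoodPS A₂) :
    GoodPS (A₁ + A₂) := by
  intro B hB
  rw [hadamardMul_add_left]
  exact (h₁ B hB).addPS (h₂ B hB)

lemma GoodPS.smulPS {A : PowerSeries ℂ} (c : ℂ) (h : GoodPS A) : GoodPS (c • A) := by
  intro B hB
  rw [hadamardMul_smul_left]
  exact (h B hB).smulPS c

lemma good_coe (p : Polynomial ℂ) : GoodPS (p : PowerSeries ℂ) := by
  intro B _
  have h : ∀ n, p.natDegree + 1 ≤ n → coeff n (hadamardMul (p : PowerSeries ℂ) B) = 0 := by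
    intro n hn
    have : coeff n (p : PowerSeries ℂ) = 0 := by
      rw [Polynomial.coeff_coe]
      exact Polynomial.coeff_eq_zero_of_natDegree_lt (by omega)
    rw [hadamardMul, PowerSeries.coeff_mk, this, zero_mul]
  obtain ⟨q, hq⟩ := eq_poly_of_coeff_eventually_zero h
  rw [hq]
  exact isAlgebraicPS_coe q

lemma hadamard_Sser_zero (α : ℂ) (B : PowerSeries ℂ) :
    hadamardMul (Sser α 0) B = rescale α B := by
  ext n
  simp [hadamardMul, Sser, PowerSeries.coeff_rescale]

lemma hadamard_Sser_succ (α : ℂ) (k : ℕ) (B : PowerSeries ℂ) :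
    hadamardMul (Sser α (k + 1)) B = hadamardMul (Sser α k) B
      + (((k : ℂ) + 1)⁻¹) •
          (PowerSeries.X * PowerSeries.derivative ℂ (hadamardMul (Sser α k) B)) := by
  have hk1 : ((k : ℂ) + 1) ≠ 0 := by
    exact_mod_cast (Nat.cast_add_one_ne_zero (R := ℂ) k)
  ext n
  rw [map_add, PowerSeries.coeff_smul, smul_eq_mul]
  cases n with
  | zero =>
    rw [PowerSeries.coeff_zero_X_mul, mul_zero, add_zero]
    simp [hadamardMul, Sser, Nat.choose_self]
  | succ n =>
    rw [PowerSeries.coeff_succ_X_mul, PowerSeries.coeff_derivative]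
    simp only [hadamardMul, PowerSeries.coeff_mk, Sser]
    -- notation: c = choose (n+1+k) k, d = choose (n+1+k) (k+1)
    have hnat : (n + 1 + k).choose (k + 1) * (k + 1) = (n + 1 + k).choose k * (n + 1) := by
      have := Nat.choose_succ_right_eq (n + 1 + k) k
      simpa using this
    have hpascal : (n + 1 + (k + 1)).choose (k + 1)
        = (n + 1 + k).choose k + (n + 1 + k).choose (k + 1) := by
      have h3 : n + 1 + (k + 1) = (n + 1 + k) + 1 := by omega
      rw [h3, Nat.choose_succ_succ]
    have hc : ((n : ℂ) + 1) * (((n + 1 + k).choose k : ℕ) : ℂ)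
        = ((k : ℂ) + 1) * (((n + 1 + k).choose (k + 1) : ℕ) : ℂ) := by
      have h5 := congrArg (fun m : ℕ => (m : ℂ)) hnat
      push_cast at h5
      linear_combination -h5
    have hc2 : ((k : ℂ) + 1)⁻¹ * (((k : ℂ) + 1) * (((n + 1 + k).choose (k + 1) : ℕ) : ℂ))
        = (((n + 1 + k).choose (k + 1) : ℕ) : ℂ) := inv_mul_cancel_left₀ hk1 _
    rw [hpascal]
    push_cast
    linear_combination (-(((k : ℂ) + 1)⁻¹ * (α ^ (n + 1) * (coeff (n + 1)) B))) * hc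
      + (-(α ^ (n + 1) * (coeff (n + 1)) B)) * hc2

lemma good_Sser (α : ℂ) : ∀ k, GoodPS (Sser α k) := by
  intro k
  induction k with
  | zero =>
    intro B hB
    rw [hadamard_Sser_zero]
    exact hB.rescalePS α
  | succ k ih =>
    intro B hB
    rw [hadamard_Sser_succ]
    have h1 := ih B hB
    refine h1.addPS (IsAlgebraicPS.smulPS _ ?_)
    have hX : (PowerSeries.X : PowerSeries ℂ)
        = ((Polynomial.X : Polynomial ℂ) : PowerSeries ℂ) := (Polynomial.coe_X).symm
    rw [hX]
    exact (isAlgebraicPS_coe _).mulPS h1.derivativePS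

lemma oneSub_mul_Sser (α : ℂ) (k : ℕ) :
    (1 - PowerSeries.C α * PowerSeries.X) * Sser α (k + 1) = Sser α k := by
  ext n
  rw [sub_mul, one_mul, map_sub, mul_assoc, PowerSeries.coeff_C_mul]
  cases n with
  | zero =>
    rw [PowerSeries.coeff_zero_X_mul, mul_zero, sub_zero]
    simp [Sser, Nat.choose_self]
  | succ n =>
    rw [PowerSeries.coeff_succ_X_mul]
    simp only [Sser, PowerSeries.coeff_mk]
    have hpascal : (n + 1 + (k + 1)).choose (k + 1)
        = (n + 1 + k).choose k + (n + (k + 1)).choose (k + 1) := by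
      have h3 : n + 1 + (k + 1) = (n + (k + 1)) + 1 := by omega
      have h4 : n + 1 + k = n + (k + 1) := by omega
      rw [h3, Nat.choose_succ_succ, h4]
    rw [hpascal]
    push_cast
    ring

lemma oneSub_mul_Sser_zero (α : ℂ) :
    (1 - PowerSeries.C α * PowerSeries.X) * Sser α 0 = 1 := by
  ext n
  rw [sub_mul, one_mul, map_sub, mul_assoc, PowerSeries.coeff_C_mul]
  cases n with
  | zero =>
    rw [PowerSeries.coeff_zero_X_mul, mul_zero, sub_zero]
    simp [Sser]
  | succ n =>
    rw [PowerSeries.coeff_succ_X_mul]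
    simp [Sser, PowerSeries.coeff_one]
    ring

lemma pow_oneSub_mul_Sser (α : ℂ) (k : ℕ) :
    (1 - PowerSeries.C α * PowerSeries.X) ^ (k + 1) * Sser α k = 1 := by
  induction k with
  | zero => rw [pow_one]; exact oneSub_mul_Sser_zero α
  | succ k ih =>
    rw [pow_succ, mul_comm ((1 - PowerSeries.C α * PowerSeries.X) ^ (k + 1))
      (1 - PowerSeries.C α * PowerSeries.X), mul_assoc,
      mul_comm ((1 - PowerSeries.C α * PowerSeries.X) ^ (k + 1)) (Sser α (k + 1)),
      ← mul_assoc, oneSub_mul_Sser, mul_comm, ih]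

end Hadamard

section Main

lemma good_const_case (Q P : Polynomial ℂ) (hd : Q.natDegree = 0) (hQ0 : Q.coeff 0 ≠ 0)
    (A : PowerSeries ℂ) (hQA : (Q : PowerSeries ℂ) * A = (P : PowerSeries ℂ)) : GoodPS A := by
  have hQC := Polynomial.eq_C_of_natDegree_eq_zero hd
  set c := Q.coeff 0 with hc
  have hA : A = ((Polynomial.C c⁻¹ * P : Polynomial ℂ) : PowerSeries ℂ) := by
    rw [hQC] at hQA
    calc A = (((Polynomial.C c⁻¹ : Polynomial ℂ) : PowerSeries ℂ)
          * ((Polynomial.C c : Polynomial ℂ) : PowerSeries ℂ)) * A := by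
          rw [← Polynomial.coe_mul, ← Polynomial.C_mul, inv_mul_cancel₀ hQ0, Polynomial.C_1,
            Polynomial.coe_one, one_mul]
      _ = ((Polynomial.C c⁻¹ : Polynomial ℂ) : PowerSeries ℂ)
          * (((Polynomial.C c : Polynomial ℂ) : PowerSeries ℂ) * A) := mul_assoc _ _ _
      _ = ((Polynomial.C c⁻¹ * P : Polynomial ℂ) : PowerSeries ℂ) := by
          rw [hQA, ← Polynomial.coe_mul]
  rw [hA]
  exact good_coe _

lemma good_of_rational_aux : ∀ d : ℕ, ∀ Q P : Polynomial ℂ, Q.natDegree ≤ d → Q.coeff 0 ≠ 0 →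
    ∀ A : PowerSeries ℂ, (Q : PowerSeries ℂ) * A = (P : PowerSeries ℂ) → GoodPS A := by
  intro d
  induction d with
  | zero =>
    intro Q P hdeg hQ0 A hQA
    exact good_const_case Q P (Nat.le_zero.mp hdeg) hQ0 A hQA
  | succ d ih =>
    intro Q P hdeg hQ0 A hQA
    by_cases hd0 : Q.natDegree = 0
    · exact good_const_case Q P hd0 hQ0 A hQA
    have hQne : Q ≠ 0 := fun h => hQ0 (by rw [h, Polynomial.coeff_zero])
    obtain ⟨β, hβ⟩ := IsAlgClosed.exists_root Q (by
      intro h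
      exact hd0 (Polynomial.natDegree_eq_zero_iff_degree_le_zero.mpr (le_of_eq h)))
    have hβ0 : β ≠ 0 := by
      intro h
      rw [h] at hβ
      exact hQ0 (by rw [Polynomial.coeff_zero_eq_eval_zero]; exact hβ)
    set k := Q.rootMultiplicity β with hk
    have hkpos : 0 < k := (Polynomial.rootMultiplicity_pos hQne).mpr hβ
    have hk1 : k - 1 + 1 = k := Nat.succ_pred_eq_of_pos hkpos
    obtain ⟨Q₁, hQeq, hndvd⟩ := Q.exists_eq_pow_rootMultiplicity_mul_and_not_dvd hQne β
    rw [← hk] at hQeq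
    have hQ₁β : Q₁.eval β ≠ 0 := fun h => hndvd (Polynomial.dvd_iff_isRoot.mpr h)
    have hQ₁ne : Q₁ ≠ 0 := fun h => hQ₁β (by rw [h, Polynomial.eval_zero])
    have hQ₁0 : Q₁.coeff 0 ≠ 0 := by
      intro h
      apply hQ0
      rw [hQeq, Polynomial.mul_coeff_zero, h, mul_zero]
    have hcoeff0pow : ∀ j : ℕ, ((Polynomial.X - Polynomial.C β) ^ j).coeff 0 = (-β) ^ j := by
      intro j
      rw [Polynomial.coeff_zero_eq_eval_zero, Polynomial.eval_pow, Polynomial.eval_sub,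
        Polynomial.eval_X, Polynomial.eval_C, zero_sub]
    have hdegQ : Q.natDegree = k + Q₁.natDegree := by
      rw [hQeq, Polynomial.natDegree_mul (pow_ne_zero _ (Polynomial.X_sub_C_ne_zero β)) hQ₁ne,
        Polynomial.natDegree_pow, Polynomial.natDegree_X_sub_C, mul_one]
    set Q' := (Polynomial.X - Polynomial.C β) ^ (k - 1) * Q₁ with hQ'
    have hQ'deg : Q'.natDegree ≤ d := by
      rw [hQ', Polynomial.natDegree_mul (pow_ne_zero _ (Polynomial.X_sub_C_ne_zero β)) hQ₁ne,
        Polynomial.natDegree_pow, Polynomial.natDegree_X_sub_C, mul_one]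
      omega
    have hQ'0 : Q'.coeff 0 ≠ 0 := by
      rw [hQ', Polynomial.mul_coeff_zero, hcoeff0pow]
      exact mul_ne_zero (pow_ne_zero _ (neg_ne_zero.mpr hβ0)) hQ₁0
    have hQsplit : Q = (Polynomial.X - Polynomial.C β) * Q' := by
      rw [hQeq, hQ', ← mul_assoc]
      congr 1
      rw [← pow_succ', hk1]
    have hconstQ' : PowerSeries.constantCoeff (Q' : PowerSeries ℂ) ≠ 0 := by
      have h1 : PowerSeries.constantCoeff (Q' : PowerSeries ℂ)
          = PowerSeries.coeff 0 (Q' : PowerSeries ℂ) :=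
        (PowerSeries.coeff_zero_eq_constantCoeff_apply _).symm
      rw [h1, Polynomial.coeff_coe]
      exact hQ'0
    set d₁ := P.eval β / Q₁.eval β with hd₁
    have hroot2 : (P - Polynomial.C d₁ * Q₁).IsRoot β := by
      show (P - Polynomial.C d₁ * Q₁).eval β = 0
      rw [Polynomial.eval_sub, Polynomial.eval_mul, Polynomial.eval_C, hd₁,
        div_mul_cancel₀ _ hQ₁β, sub_self]
    obtain ⟨P₂, hP₂⟩ := Polynomial.dvd_iff_isRoot.mpr hroot2
    set A₂ := ((Q' : PowerSeries ℂ))⁻¹ * (P₂ : PowerSeries ℂ) with hA₂def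
    have hA₂ : (Q' : PowerSeries ℂ) * A₂ = (P₂ : PowerSeries ℂ) := by
      rw [hA₂def, ← mul_assoc, PowerSeries.mul_inv_cancel _ hconstQ', one_mul]
    set α := β⁻¹ with hα
    have hfac : ((Polynomial.X - Polynomial.C β : Polynomial ℂ) : PowerSeries ℂ)
        = PowerSeries.C (-β) * (1 - PowerSeries.C α * PowerSeries.X) := by
      have hβα : -β * α = -1 := by
        rw [hα]
        field_simp
      rw [mul_sub, mul_one, ← mul_assoc, ← map_mul, hβα, Polynomial.coe_sub, Polynomial.coe_X,
        Polynomial.coe_C]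
      simp only [map_neg, map_one]
      ring
    have hSinv : (((Polynomial.X - Polynomial.C β) ^ k : Polynomial ℂ) : PowerSeries ℂ)
        * Sser α (k - 1) = PowerSeries.C ((-β) ^ k) := by
      have h2 := pow_oneSub_mul_Sser α (k - 1)
      rw [hk1] at h2
      rw [Polynomial.coe_pow, hfac, mul_pow, ← map_pow, mul_assoc, h2, mul_one]
    have hβk : ((-β) ^ k : ℂ) ≠ 0 := pow_ne_zero _ (neg_ne_zero.mpr hβ0)
    set e := d₁ * (((-β) ^ k : ℂ))⁻¹ with he
    have hAeq : A = A₂ + e • Sser α (k - 1) := by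
      have hQser : (Q : PowerSeries ℂ) ≠ 0 := by
        rw [Ne, Polynomial.coe_eq_zero_iff]
        exact hQne
      apply mul_left_cancel₀ hQser
      rw [hQA, mul_add]
      have t1 : (Q : PowerSeries ℂ) * A₂
          = ((P - Polynomial.C d₁ * Q₁ : Polynomial ℂ) : PowerSeries ℂ) := by
        rw [hQsplit, Polynomial.coe_mul, mul_assoc, hA₂, ← Polynomial.coe_mul, ← hP₂]
      have t2 : (Q : PowerSeries ℂ) * (e • Sser α (k - 1))
          = ((Polynomial.C d₁ * Q₁ : Polynomial ℂ) : PowerSeries ℂ) := by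
        rw [PowerSeries.smul_eq_C_mul, hQeq, Polynomial.coe_mul]
        calc (((Polynomial.X - Polynomial.C β) ^ k : Polynomial ℂ) : PowerSeries ℂ)
              * (Q₁ : PowerSeries ℂ) * (PowerSeries.C e * Sser α (k - 1))
            = PowerSeries.C e * ((((Polynomial.X - Polynomial.C β) ^ k : Polynomial ℂ)
                : PowerSeries ℂ) * Sser α (k - 1)) * (Q₁ : PowerSeries ℂ) := by ring
          _ = PowerSeries.C e * PowerSeries.C ((-β) ^ k) * (Q₁ : PowerSeries ℂ) := by
              rw [hSinv]
          _ = PowerSeries.C d₁ * (Q₁ : PowerSeries ℂ) := by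
              rw [← map_mul, he, inv_mul_cancel_right₀ hβk]
          _ = ((Polynomial.C d₁ * Q₁ : Polynomial ℂ) : PowerSeries ℂ) := by
              rw [Polynomial.coe_mul, Polynomial.coe_C]
      rw [t1, t2, ← Polynomial.coe_add, sub_add_cancel]
    rw [hAeq]
    exact (ih Q' P₂ hQ'deg hQ'0 A₂ hA₂).addPS (GoodPS.smulPS e (good_Sser α (k - 1)))

end Main

end JungenAux


/-- (Jungen) The Hadamard product of a rational power series and an algebraic power
series over `ℂ` is algebraic over `ℂ(z)`. -/
theorem isAlgebraicPS_hadamardMul_of_rational (A B : PowerSeries ℂ)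
    (hA : IsRationalPS A) (hB : IsAlgebraicPS B) :
    IsAlgebraicPS (hadamardMul A B) := by
  obtain ⟨P, Q, hQ0, hQA⟩ := hA
  exact good_of_rational_aux Q.natDegree Q P le_rfl hQ0 A hQA B hB
end

section
/- Let F = Σ aₙ zⁿ ∈ ℂ⟦z⟧ be a formal power series that is algebraic over ℂ(z). Then F has positive radius of convergence: there exists a real constant C > 0 such that |aₙ| ≤ C^{n+1} for all n ≥ 0. -/
open PowerSeries

section AuxProof
open Polynomial Finset

-- helper: sum of 1/(v+1)^2 bounded by 2
lemma sum_inv_sq_le (s : ℕ) : ∑ v ∈ Finset.range (s+1), (1:ℝ)/((v:ℝ)+1)^2 ≤ 2 := by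
  have h : ∀ k : ℕ, ∑ v ∈ Finset.range (k+1), (1:ℝ)/((v:ℝ)+1)^2 ≤ 2 - 1/((k:ℝ)+1) := by
    intro k
    induction k with
    | zero => norm_num
    | succ k ih =>
      rw [Finset.sum_range_succ]
      have h1 : (1:ℝ)/((k:ℝ)+1+1)^2 ≤ 1/((k:ℝ)+1) - 1/((k:ℝ)+1+1) := by
        rw [div_sub_div _ _ (by positivity) (by positivity)]
        rw [div_le_div_iff₀ (by positivity) (by positivity)]
        ring_nf
        nlinarith [sq_nonneg ((k:ℝ)+1)]
      push_cast
      linarith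
  have := h s
  have h2 : (0:ℝ) < 1/((s:ℝ)+1) := by positivity
  linarith

lemma antidiag_weight (s : ℕ) :
    ∑ p ∈ Finset.HasAntidiagonal.antidiagonal s, (1:ℝ)/(((p.1:ℝ)+1)^2*((p.2:ℝ)+1)^2) ≤ 16/((s:ℝ)+1)^2 := by
  have key : ∀ p ∈ Finset.HasAntidiagonal.antidiagonal s, (1:ℝ)/(((p.1:ℝ)+1)^2*((p.2:ℝ)+1)^2) ≤
      4/((s:ℝ)+1)^2 * (1/((p.1:ℝ)+1)^2 + 1/((p.2:ℝ)+1)^2) := by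
    rintro ⟨u,v⟩ hp
    rw [Finset.HasAntidiagonal.mem_antidiagonal] at hp
    have hs : (u:ℝ) + (v:ℝ) = s := by exact_mod_cast congrArg Nat.cast hp
    have h2 : ((s:ℝ)+1) ≤ 2*((u:ℝ)+1) ∨ ((s:ℝ)+1) ≤ 2*((v:ℝ)+1) := by
      by_contra hc
      push_neg at hc
      linarith [hc.1, hc.2]
    have hu : (0:ℝ) < (u:ℝ)+1 := by positivity
    have hv : (0:ℝ) < (v:ℝ)+1 := by positivity
    have hs1 : (0:ℝ) < (s:ℝ)+1 := by positivity
    rcases h2 with h | h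
    · have : ((s:ℝ)+1)^2 ≤ 4*((u:ℝ)+1)^2 := by nlinarith
      calc (1:ℝ)/(((u:ℝ)+1)^2*((v:ℝ)+1)^2) ≤ 4/((s:ℝ)+1)^2 * (1/((v:ℝ)+1)^2) := by
            have e : 4/((s:ℝ)+1)^2 * ((1:ℝ)/((v:ℝ)+1)^2) = 4/(((s:ℝ)+1)^2*((v:ℝ)+1)^2) := by rw [div_mul_div_comm, mul_one]
            rw [e, div_le_div_iff₀ (by positivity) (by positivity)]
            nlinarith [mul_le_mul_of_nonneg_right this (sq_nonneg ((v:ℝ)+1))]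
        _ ≤ _ := by
            have : (0:ℝ) ≤ 4/((s:ℝ)+1)^2 * (1/((u:ℝ)+1)^2) := by positivity
            linarith
    · have : ((s:ℝ)+1)^2 ≤ 4*((v:ℝ)+1)^2 := by nlinarith
      calc (1:ℝ)/(((u:ℝ)+1)^2*((v:ℝ)+1)^2) ≤ 4/((s:ℝ)+1)^2 * (1/((u:ℝ)+1)^2) := by
            have e : 4/((s:ℝ)+1)^2 * ((1:ℝ)/((u:ℝ)+1)^2) = 4/(((s:ℝ)+1)^2*((u:ℝ)+1)^2) := by rw [div_mul_div_comm, mul_one]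
            rw [e, div_le_div_iff₀ (by positivity) (by positivity)]
            nlinarith [mul_le_mul_of_nonneg_right this (sq_nonneg ((u:ℝ)+1))]
        _ ≤ _ := by
            have : (0:ℝ) ≤ 4/((s:ℝ)+1)^2 * (1/((v:ℝ)+1)^2) := by positivity
            linarith
  calc ∑ p ∈ Finset.HasAntidiagonal.antidiagonal s, (1:ℝ)/(((p.1:ℝ)+1)^2*((p.2:ℝ)+1)^2)
      ≤ ∑ p ∈ Finset.HasAntidiagonal.antidiagonal s, 4/((s:ℝ)+1)^2 * (1/((p.1:ℝ)+1)^2 + 1/((p.2:ℝ)+1)^2) :=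
        Finset.sum_le_sum key
    _ = 4/((s:ℝ)+1)^2 * (∑ p ∈ Finset.HasAntidiagonal.antidiagonal s, (1/((p.1:ℝ)+1)^2 + 1/((p.2:ℝ)+1)^2)) := by
        rw [Finset.mul_sum]
    _ ≤ 16/((s:ℝ)+1)^2 := by
        rw [Finset.sum_add_distrib]
        rw [Finset.Nat.sum_antidiagonal_eq_sum_range_succ_mk, Finset.Nat.sum_antidiagonal_eq_sum_range_succ_mk]
        have e1 : ∑ i ∈ Finset.range (s+1), (1:ℝ)/((i:ℝ)+1)^2 ≤ 2 := sum_inv_sq_le s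
        have e2 : ∑ i ∈ Finset.range (s+1), (1:ℝ)/(((s-i : ℕ):ℝ)+1)^2 ≤ 2 := by
          have hre := Finset.sum_range_reflect (fun i => (1:ℝ)/((i:ℝ)+1)^2) (s+1)
          simp only [Nat.add_sub_cancel] at hre
          rw [hre]
          exact sum_inv_sq_le s
        have hnn : (0:ℝ) ≤ 4/((s:ℝ)+1)^2 := by positivity
        have : (∑ i ∈ Finset.range (s+1), (1:ℝ)/((i:ℝ)+1)^2) + (∑ i ∈ Finset.range (s+1), (1:ℝ)/(((s-i : ℕ):ℝ)+1)^2) ≤ 4 := by linarith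
        calc 4/((s:ℝ)+1)^2 * _ ≤ 4/((s:ℝ)+1)^2 * 4 := mul_le_mul_of_nonneg_left this hnn
          _ = 16/((s:ℝ)+1)^2 := by ring

noncomputable def wt (ε M : ℝ) (k : ℕ) : ℝ := ε * M^k / ((k:ℝ)+1)^2

lemma wt_nonneg {ε M : ℝ} (hε : 0 ≤ ε) (hM : 0 ≤ M) (k : ℕ) : 0 ≤ wt ε M k := by
  unfold wt; positivity

lemma wt_aux {ε M : ℝ} (hε : 0 ≤ ε) (hM : 1 ≤ M) {s e : ℕ} (hse : s ≤ e) {a b : ℕ}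
    (hab : (a:ℝ)+1 ≤ ((b:ℝ)+1)*((s:ℝ)+1)) :
    wt ε M s ≤ ((b:ℝ)+1)^2 * ε * M^e / ((a:ℝ)+1)^2 := by
  have hM0 : (0:ℝ) ≤ M := le_trans zero_le_one hM
  have h2 : M^s ≤ M^e := pow_le_pow_right₀ hM hse
  have h1 : ((a:ℝ)+1)^2 ≤ ((b:ℝ)+1)^2*((s:ℝ)+1)^2 := by nlinarith [hab]
  rw [wt, div_le_div_iff₀ (by positivity) (by positivity)]
  have h3 : M^s * ((a:ℝ)+1)^2 ≤ M^e * (((b:ℝ)+1)^2*((s:ℝ)+1)^2) :=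
    mul_le_mul h2 h1 (by positivity) (by positivity)
  nlinarith [mul_le_mul_of_nonneg_left h3 hε]

lemma wt_shift {ε M : ℝ} (hε : 0 ≤ ε) (hM : 1 ≤ M) (n r : ℕ) :
    wt ε M (n+r) ≤ M^r * wt ε M n := by
  have hM0 : (0:ℝ) ≤ M := le_trans zero_le_one hM
  rw [wt, wt, mul_div_assoc']
  rw [div_le_div_iff₀ (by positivity) (by positivity)]
  have h1 : ((n:ℝ)+1)^2 ≤ ((n:ℝ)+(r:ℝ)+1)^2 := by nlinarith [Nat.cast_nonneg (α := ℝ) r, Nat.cast_nonneg (α := ℝ) n]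
  have h2 : ε * M^(n+r) = ε * (M^r * M^n) := by rw [pow_add]; ring
  push_cast
  nlinarith [mul_nonneg (mul_nonneg hε (pow_nonneg hM0 r)) (pow_nonneg hM0 n), h1]

lemma card_antidiag_filter (N d : ℕ) :
    ((Finset.HasAntidiagonal.antidiagonal N).filter (fun p => p.1 ≤ d)).card ≤ d + 1 := by
  have : ((Finset.HasAntidiagonal.antidiagonal N).filter (fun p => p.1 ≤ d)) ⊆
      (Finset.range (d+1)).image (fun m => (m, N - m)) := by
    rintro ⟨u,v⟩ hp
    rw [Finset.mem_filter, Finset.HasAntidiagonal.mem_antidiagonal] at hp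
    rw [Finset.mem_image]
    exact ⟨u, Finset.mem_range.mpr (by omega), by simp; omega⟩
  calc _ ≤ ((Finset.range (d+1)).image (fun m => (m, N - m))).card := Finset.card_le_card this
    _ ≤ (Finset.range (d+1)).card := Finset.card_image_le
    _ = d + 1 := Finset.card_range _

lemma coeff_mul_poly_bound (c : Polynomial ℂ) (Y : PowerSeries ℂ) (d : ℕ) (mp : ℝ)
    (hc1 : ∀ m, ‖c.coeff m‖ ≤ mp) (hc2 : ∀ m, d < m → c.coeff m = 0)
    (W : ℕ → ℝ) (hY : ∀ s, ‖PowerSeries.coeff s Y‖ ≤ W s) (N : ℕ) (B : ℝ)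
    (hB : ∀ m s, m + s = N → m ≤ d → W s ≤ B) (hBnn : 0 ≤ B) :
    ‖PowerSeries.coeff N ((c : PowerSeries ℂ) * Y)‖ ≤ ((d:ℝ) + 1) * (mp * B) := by
  have hmp0 : 0 ≤ mp := le_trans (norm_nonneg _) (hc1 0)
  rw [PowerSeries.coeff_mul]
  calc ‖∑ p ∈ Finset.HasAntidiagonal.antidiagonal N, PowerSeries.coeff p.1 (c : PowerSeries ℂ) * PowerSeries.coeff p.2 Y‖
      ≤ ∑ p ∈ Finset.HasAntidiagonal.antidiagonal N, ‖PowerSeries.coeff p.1 (c : PowerSeries ℂ) * PowerSeries.coeff p.2 Y‖ :=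
        norm_sum_le _ _
    _ ≤ ∑ p ∈ Finset.HasAntidiagonal.antidiagonal N, (if p.1 ≤ d then mp * B else 0) := by
        apply Finset.sum_le_sum
        rintro ⟨m,s⟩ hp
        rw [Finset.HasAntidiagonal.mem_antidiagonal] at hp
        rw [norm_mul, Polynomial.coeff_coe]
        by_cases hmd : m ≤ d
        · rw [if_pos hmd]
          exact mul_le_mul (hc1 m) (le_trans (hY s) (hB m s hp hmd)) (norm_nonneg _)
            hmp0
        · rw [if_neg hmd, hc2 m (by omega), norm_zero, zero_mul]
    _ = ((Finset.HasAntidiagonal.antidiagonal N).filter (fun p => p.1 ≤ d)).card * (mp * B) := by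
        rw [← Finset.sum_filter, Finset.sum_const, nsmul_eq_mul]
    _ ≤ ((d:ℝ) + 1) * (mp * B) := by
        apply mul_le_mul_of_nonneg_right _ (mul_nonneg hmp0 hBnn)
        have := card_antidiag_filter N d
        exact_mod_cast Nat.cast_le.mpr this |>.trans (by push_cast; linarith)
lemma conv_bound {ε M α β : ℝ} (hε : 0 ≤ ε) (hM : 0 ≤ M) (hα : 0 ≤ α) (hβ : 0 ≤ β)
    (X Y : PowerSeries ℂ)
    (hX : ∀ u, ‖coeff u X‖ ≤ α * wt ε M u) (hY : ∀ v, ‖coeff v Y‖ ≤ β * wt ε M v) :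
    ∀ s, ‖coeff s (X * Y)‖ ≤ α * β * (16 * ε) * wt ε M s := by
  intro s
  rw [PowerSeries.coeff_mul]
  calc ‖∑ p ∈ Finset.HasAntidiagonal.antidiagonal s, coeff p.1 X * coeff p.2 Y‖
      ≤ ∑ p ∈ Finset.HasAntidiagonal.antidiagonal s, ‖coeff p.1 X * coeff p.2 Y‖ := norm_sum_le _ _
    _ ≤ ∑ p ∈ Finset.HasAntidiagonal.antidiagonal s, (α * β * ε^2 * M^s) * (1/(((p.1:ℝ)+1)^2*((p.2:ℝ)+1)^2)) := by
        apply Finset.sum_le_sum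
        rintro ⟨u,v⟩ hp
        rw [Finset.HasAntidiagonal.mem_antidiagonal] at hp
        rw [norm_mul]
        have h1 := hX u
        have h2 := hY v
        have e : (α * β * ε^2 * M^s) * (1/(((u:ℝ)+1)^2*((v:ℝ)+1)^2))
            = (α * wt ε M u) * (β * wt ε M v) := by
          unfold wt
          rw [← hp]
          rw [pow_add]
          field_simp
        rw [e]
        exact mul_le_mul h1 h2 (norm_nonneg _) (mul_nonneg hα (wt_nonneg hε hM u))
    _ = (α * β * ε^2 * M^s) * ∑ p ∈ Finset.HasAntidiagonal.antidiagonal s, (1/(((p.1:ℝ)+1)^2*((p.2:ℝ)+1)^2)) := by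
        rw [Finset.mul_sum]
    _ ≤ (α * β * ε^2 * M^s) * (16/((s:ℝ)+1)^2) := by
        apply mul_le_mul_of_nonneg_left (antidiag_weight s) (by positivity)
    _ = α * β * (16 * ε) * wt ε M s := by unfold wt; ring

lemma pow_bound {ε M : ℝ} (hε : 0 ≤ ε) (hM : 0 ≤ M)
    (T : PowerSeries ℂ) (hT : ∀ u, ‖coeff u T‖ ≤ wt ε M u) :
    ∀ j s, ‖coeff s (T^(j+1))‖ ≤ (16*ε)^j * wt ε M s := by
  intro j
  induction j with
  | zero => intro s; simpa using hT s
  | succ j ih =>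
    intro s
    have h := conv_bound (α := 1) (β := (16*ε)^j) hε hM (by norm_num) (by positivity) T (T^(j+1))
      (by intro u; rw [one_mul]; exact hT u) ih s
    rw [pow_succ _ (j+1)] at *
    calc ‖coeff s (T^(j+1) * T)‖ = ‖coeff s (T * T^(j+1))‖ := by rw [mul_comm]
      _ ≤ 1 * (16*ε)^j * (16*ε) * wt ε M s := h
      _ = (16*ε)^j * (16*ε) * wt ε M s := by ring

lemma coeff_eq_zero_of_X_pow_dvd {m i : ℕ} {f : PowerSeries ℂ} (h : (PowerSeries.X)^m ∣ f)
    (hi : i < m) : PowerSeries.coeff i f = 0 :=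
  (PowerSeries.X_pow_dvd_iff.mp h) i hi

lemma key_identity (Q' : Polynomial (PowerSeries ℂ)) (A : PowerSeries ℂ) (r n : ℕ) (hrn : r < n)
    (hQA : Q'.eval A = 0)
    (hGlow : ∀ i < r, PowerSeries.coeff i (Q'.derivative.eval A) = 0) :
    (PowerSeries.coeff r (Q'.derivative.eval A)) * PowerSeries.coeff n A
      = - PowerSeries.coeff (n+r) (Q'.eval ((A.trunc n : Polynomial ℂ) : PowerSeries ℂ)) := by
  set G := Q'.derivative.eval A with hG
  set T : PowerSeries ℂ := ((A.trunc n : Polynomial ℂ) : PowerSeries ℂ) with hT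
  set U : PowerSeries ℂ := A - T with hU
  have hTU : T + U = A := by rw [hU]; ring
  have hUc : ∀ k < n, PowerSeries.coeff k U = 0 := by
    intro k hk
    rw [hU, map_sub, hT, Polynomial.coeff_coe, PowerSeries.coeff_trunc, if_pos hk, sub_self]
  have hUdvd : (PowerSeries.X : PowerSeries ℂ)^n ∣ U := PowerSeries.X_pow_dvd_iff.mpr hUc
  obtain ⟨k, hk⟩ := Q'.binomExpansion T U
  rw [hTU, hQA] at hk
  obtain ⟨s, hs⟩ := Polynomial.sub_dvd_eval_sub T A Q'.derivative
  have hTA : T - A = -U := by rw [hU]; ring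
  rw [hTA, ← hG] at hs
  have hDT : Q'.derivative.eval T = G + (-U) * s := by linear_combination hs
  rw [hDT] at hk
  -- hk : 0 = Q'.eval T + (G + -U * s) * U + k * U ^ 2
  have hexp : (0 : PowerSeries ℂ) = Q'.eval T + G * U + (k - s) * U^2 := by
    rw [hk]; ring
  have happ := congrArg (PowerSeries.coeff (n+r)) hexp
  rw [map_zero, map_add, map_add] at happ
  have hU2 : PowerSeries.coeff (n+r) ((k - s) * U^2) = 0 := by
    apply coeff_eq_zero_of_X_pow_dvd (m := 2*n)
    · exact Dvd.dvd.mul_left (by rw [two_mul, pow_add, sq]; exact mul_dvd_mul hUdvd hUdvd) _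
    · omega
  have hGU : PowerSeries.coeff (n+r) (G * U) = (PowerSeries.coeff r G) * PowerSeries.coeff n A := by
    rw [PowerSeries.coeff_mul]
    rw [Finset.sum_eq_single (r, n)]
    · have : PowerSeries.coeff n U = PowerSeries.coeff n A := by
        rw [hU, map_sub, hT, Polynomial.coeff_coe, PowerSeries.coeff_trunc, if_neg (lt_irrefl n), sub_zero]
      rw [this]
    · rintro ⟨i, j⟩ hmem hne
      rw [Finset.HasAntidiagonal.mem_antidiagonal] at hmem
      rcases lt_trichotomy i r with hir | hir | hir
      · rw [hGlow i hir, zero_mul]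
      · exfalso; apply hne; subst hir; simp at hmem ⊢; omega
      · have : j < n := by omega
        rw [hUc j this, mul_zero]
    · intro hmem
      exfalso; apply hmem
      rw [Finset.HasAntidiagonal.mem_antidiagonal]; omega
  rw [hU2, hGU] at happ
  linear_combination -happ
section Core
open Polynomial

set_option maxHeartbeats 1600000 in
lemma core (Q : Polynomial (Polynomial ℂ)) (A : PowerSeries ℂ) (r : ℕ)
    (hQA : (Q.map Polynomial.coeToPowerSeries.ringHom).eval A = 0)
    (hGlow : ∀ i < r, PowerSeries.coeff i
      (((Q.map Polynomial.coeToPowerSeries.ringHom).derivative).eval A) = 0)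
    (hg : PowerSeries.coeff r
      (((Q.map Polynomial.coeToPowerSeries.ringHom).derivative).eval A) ≠ 0)
    (hA0 : ∀ k ≤ r, PowerSeries.coeff k A = 0) :
    ∃ C : ℝ, 0 < C ∧ ∀ n, ‖PowerSeries.coeff n A‖ ≤ C^(n+1) := by
  classical
  set Q' : Polynomial (PowerSeries ℂ) := Q.map Polynomial.coeToPowerSeries.ringHom with hQ'
  set G : PowerSeries ℂ := Q'.derivative.eval A with hGdef
  set η : ℝ := ‖PowerSeries.coeff r G‖ with hηdef
  have hη : 0 < η := norm_pos_iff.mpr hg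
  set D : ℕ := Q.natDegree with hD
  set d : ℕ := (Finset.range (D+1)).sup (fun j => (Q.coeff j).natDegree) with hd
  have hdj : ∀ j m, d < m → (Q.coeff j).coeff m = 0 := by
    intro j m hm
    by_cases hj : j ≤ D
    · apply Polynomial.coeff_eq_zero_of_natDegree_lt
      calc (Q.coeff j).natDegree ≤ d :=
            Finset.le_sup (f := fun j => (Q.coeff j).natDegree) (Finset.mem_range.mpr (by omega))
        _ < m := hm
    · rw [Polynomial.coeff_eq_zero_of_natDegree_lt (show Q.natDegree < j from not_le.mp hj)]
      simp
  set mp : ℝ := (∑ j ∈ Finset.range (D+1), ∑ m ∈ Finset.range (d+1), ‖(Q.coeff j).coeff m‖) + 1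
    with hmpdef
  have hmp1 : 1 ≤ mp := by
    have : (0:ℝ) ≤ ∑ j ∈ Finset.range (D+1), ∑ m ∈ Finset.range (d+1), ‖(Q.coeff j).coeff m‖ := by
      apply Finset.sum_nonneg; intro j _; apply Finset.sum_nonneg; intro m _; exact norm_nonneg _
    rw [hmpdef]; linarith
  have hmp0 : 0 < mp := lt_of_lt_of_le one_pos hmp1
  have hmpc : ∀ j m, ‖(Q.coeff j).coeff m‖ ≤ mp := by
    intro j m
    by_cases hj : j ≤ D
    · by_cases hm : m ≤ d
      · rw [hmpdef]
        have h1 : ‖(Q.coeff j).coeff m‖ ≤ ∑ m' ∈ Finset.range (d+1), ‖(Q.coeff j).coeff m'‖ :=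
          Finset.single_le_sum (fun i _ => norm_nonneg _) (Finset.mem_range.mpr (by omega))
        have h2 : ∑ m' ∈ Finset.range (d+1), ‖(Q.coeff j).coeff m'‖ ≤
            ∑ j' ∈ Finset.range (D+1), ∑ m' ∈ Finset.range (d+1), ‖(Q.coeff j').coeff m'‖ :=
          Finset.single_le_sum (f := fun j' => ∑ m' ∈ Finset.range (d+1), ‖(Q.coeff j').coeff m'‖)
            (fun i _ => Finset.sum_nonneg (fun _ _ => norm_nonneg _))
            (Finset.mem_range.mpr (by omega))
        linarith
      · rw [hdj j m (not_le.mp hm), norm_zero]; linarith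
    · rw [Polynomial.coeff_eq_zero_of_natDegree_lt (show Q.natDegree < j from not_le.mp hj)]
      simp; linarith
  set N₀ : ℕ := max r d with hN₀
  set S : ℝ := ∑ k ∈ Finset.range (N₀+1), ‖PowerSeries.coeff k A‖ with hSdef
  have hS0 : 0 ≤ S := Finset.sum_nonneg (fun _ _ => norm_nonneg _)
  set c₂ : ℝ := min (1/16) (η/(32*((D:ℝ)+1)*mp*((d:ℝ)+1)^3)) with hc₂def
  have h32pos : (0:ℝ) < 32*((D:ℝ)+1)*mp*((d:ℝ)+1)^3 :=
    mul_pos (mul_pos (mul_pos (by norm_num) (by positivity)) hmp0) (by positivity)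
  have hc₂pos : 0 < c₂ := lt_min (by norm_num) (div_pos hη h32pos)
  have hc₂16 : c₂ ≤ 1/16 := min_le_left _ _
  have hc₂2 : 32*((D:ℝ)+1)*mp*((d:ℝ)+1)^3*c₂ ≤ η := by
    have h := min_le_right (1/16) (η/(32*((D:ℝ)+1)*mp*((d:ℝ)+1)^3))
    rw [← hc₂def] at h
    have hpos : (0:ℝ) < 32*((D:ℝ)+1)*mp*((d:ℝ)+1)^3 := h32pos
    calc 32*((D:ℝ)+1)*mp*((d:ℝ)+1)^3*c₂
        ≤ 32*((D:ℝ)+1)*mp*((d:ℝ)+1)^3*(η/(32*((D:ℝ)+1)*mp*((d:ℝ)+1)^3)) :=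
          mul_le_mul_of_nonneg_left h (le_of_lt hpos)
      _ = η := by field_simp
  set M : ℝ := max (max 1 (2*((D:ℝ)+1)*mp*((d:ℝ)+1)^3/η)) ((S+1)*((N₀:ℝ)+1)^2/c₂) with hMdef
  have hM1 : 1 ≤ M := le_trans (le_max_left _ _) (le_max_left _ _)
  have hM0 : (0:ℝ) < M := lt_of_lt_of_le one_pos hM1
  have hMa : 2*((D:ℝ)+1)*mp*((d:ℝ)+1)^3/η ≤ M := le_trans (le_max_right _ _) (le_max_left _ _)
  have hMb : (S+1)*((N₀:ℝ)+1)^2/c₂ ≤ M := le_max_right _ _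
  set ε : ℝ := c₂ / M^r with hεdef
  have hεpos : 0 < ε := div_pos hc₂pos (pow_pos hM0 r)
  have hεM : ε * M^r = c₂ := by
    rw [hεdef]; field_simp
  have hεc₂ : ε ≤ c₂ := by
    rw [hεdef]
    calc c₂ / M^r ≤ c₂ / 1 := by
          apply div_le_div_of_nonneg_left (le_of_lt hc₂pos) one_pos (one_le_pow₀ hM1)
      _ = c₂ := div_one _
  have hε16 : 16 * ε ≤ 1 := by
    have : ε ≤ 1/16 := le_trans hεc₂ hc₂16
    linarith
  -- main induction
  have main : ∀ n, ‖PowerSeries.coeff n A‖ ≤ wt ε M n := by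
    intro n
    induction n using Nat.strong_induction_on with
    | _ n ih =>
    by_cases hn : n ≤ N₀
    · by_cases hnr : n ≤ r
      · rw [hA0 n hnr, norm_zero]
        exact wt_nonneg (le_of_lt hεpos) (le_of_lt hM0) n
      · -- base case r < n ≤ N₀
        push_neg at hnr
        have h1 : ‖PowerSeries.coeff n A‖ ≤ S := by
          rw [hSdef]
          exact Finset.single_le_sum (f := fun k => ‖PowerSeries.coeff k A‖)
            (fun i _ => norm_nonneg _) (Finset.mem_range.mpr (by omega))
        have h2 : (S+1)*((N₀:ℝ)+1)^2 ≤ c₂ * M := by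
          rw [div_le_iff₀ hc₂pos] at hMb
          linarith [hMb]
        have h3 : c₂ * M ≤ ε * M^n := by
          have : M^r * M ≤ M^n := by
            calc M^r * M = M^(r+1) := by rw [pow_succ]
              _ ≤ M^n := pow_le_pow_right₀ hM1 (by omega)
          calc c₂ * M = ε * (M^r * M) := by rw [← hεM]; ring
            _ ≤ ε * M^n := mul_le_mul_of_nonneg_left this (le_of_lt hεpos)
        have h4 : ((n:ℝ)+1)^2 ≤ ((N₀:ℝ)+1)^2 := by
          have : (n:ℝ) ≤ (N₀:ℝ) := Nat.cast_le.mpr hn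
          nlinarith [Nat.cast_nonneg (α := ℝ) n]
        rw [wt]
        rw [le_div_iff₀ (by positivity)]
        calc ‖PowerSeries.coeff n A‖ * ((n:ℝ)+1)^2 ≤ (S+1) * ((N₀:ℝ)+1)^2 := by
              apply mul_le_mul (by linarith) h4 (by positivity) (by linarith)
          _ ≤ c₂ * M := h2
          _ ≤ ε * M^n := h3
    · -- induction step n > N₀
      push_neg at hn
      have hrn : r < n := lt_of_le_of_lt (le_max_left r d) hn
      have hdn : d < n := lt_of_le_of_lt (le_max_right r d) hn
      set T : PowerSeries ℂ := ((A.trunc n : Polynomial ℂ) : PowerSeries ℂ) with hTdef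
      set N : ℕ := n + r with hNdef
      have hid := key_identity Q' A r n hrn hQA hGlow
      have hTw : ∀ u, ‖PowerSeries.coeff u T‖ ≤ wt ε M u := by
        intro u
        rw [hTdef, Polynomial.coeff_coe, PowerSeries.coeff_trunc]
        by_cases hu : u < n
        · rw [if_pos hu]; exact ih u hu
        · rw [if_neg hu, norm_zero]
          exact wt_nonneg (le_of_lt hεpos) (le_of_lt hM0) u
      -- uniform bound for each term j
      have hQ'deg : Q'.natDegree < D + 1 := by
        have h := Polynomial.natDegree_map_le
          (f := Polynomial.coeToPowerSeries.ringHom (R := ℂ)) (p := Q)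
        rw [hQ', hD]
        omega
      have heval : Q'.eval T = ∑ j ∈ Finset.range (D+1), Q'.coeff j * T^j :=
        Polynomial.eval_eq_sum_range' hQ'deg T
      set B1 : ℝ := ((d:ℝ)+1)^2 * ε * M^(n-1) / ((N:ℝ)+1)^2 with hB1def
      set B2 : ℝ := (16*ε) * (((d:ℝ)+1)^2 * wt ε M N) with hB2def
      have hB1nn : 0 ≤ B1 := by
        rw [hB1def]
        apply div_nonneg _ (by positivity)
        exact mul_nonneg (mul_nonneg (by positivity) hεpos.le) (pow_nonneg hM0.le _)
      have hB2nn : 0 ≤ B2 := by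
        rw [hB2def]
        exact mul_nonneg (by linarith) (mul_nonneg (by positivity)
          (wt_nonneg hεpos.le hM0.le N))
      have hcoeffQ' : ∀ j, Q'.coeff j = ((Q.coeff j : Polynomial ℂ) : PowerSeries ℂ) := by
        intro j
        rw [hQ', Polynomial.coeff_map, Polynomial.coeToPowerSeries.ringHom_apply]
      have hNd : d < N := by omega
      have hab0 : ∀ m s : ℕ, m + s = N → m ≤ d → (N:ℝ)+1 ≤ ((d:ℝ)+1)*((s:ℝ)+1) := by
        intro m s hms hmd
        have h1 : (N:ℝ) = (m:ℝ) + (s:ℝ) := by exact_mod_cast congrArg Nat.cast hms.symm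
        have h2 : (m:ℝ) ≤ (d:ℝ) := Nat.cast_le.mpr hmd
        have h3 : (0:ℝ) ≤ (s:ℝ) := Nat.cast_nonneg s
        have h4 : (0:ℝ) ≤ (m:ℝ) := Nat.cast_nonneg m
        nlinarith
      have hterm : ∀ j ∈ Finset.range (D+1),
          ‖PowerSeries.coeff N (Q'.coeff j * T^j)‖ ≤ ((d:ℝ)+1) * (mp * B1) + ((d:ℝ)+1) * (mp * B2) := by
        intro j hjmem
        have hrhs1 : 0 ≤ ((d:ℝ)+1) * (mp * B1) :=
          mul_nonneg (by positivity) (mul_nonneg hmp0.le hB1nn)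
        have hrhs2 : 0 ≤ ((d:ℝ)+1) * (mp * B2) :=
          mul_nonneg (by positivity) (mul_nonneg hmp0.le hB2nn)
        match j with
        | 0 =>
          rw [pow_zero, mul_one, hcoeffQ' 0, Polynomial.coeff_coe, hdj 0 N hNd, norm_zero]
          linarith
        | 1 =>
          rw [pow_one, hcoeffQ' 1]
          have hb := coeff_mul_poly_bound (Q.coeff 1) T d mp (hmpc 1) (hdj 1)
            (fun s => if s < n then wt ε M s else 0)
            (by
              intro s
              show ‖PowerSeries.coeff s T‖ ≤ if s < n then wt ε M s else 0
              by_cases hs : s < n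
              · rw [if_pos hs]; exact hTw s
              · rw [if_neg hs, hTdef, Polynomial.coeff_coe, PowerSeries.coeff_trunc,
                  if_neg hs, norm_zero])
            N B1
            (by
              intro m s hms hmd
              show (if s < n then wt ε M s else 0) ≤ B1
              by_cases hs : s < n
              · rw [if_pos hs, hB1def]
                exact wt_aux hεpos.le hM1 (show s ≤ n-1 by omega) (hab0 m s hms hmd)
              · rw [if_neg hs]; exact hB1nn)
            hB1nn
          linarith
        | (j+2) =>
          have hb := coeff_mul_poly_bound (Q.coeff (j+2)) (T^(j+2)) d mp (hmpc (j+2)) (hdj (j+2))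
            (fun s => (16*ε)^(j+1) * wt ε M s)
            (by
              intro s
              show ‖PowerSeries.coeff s (T^(j+2))‖ ≤ (16*ε)^(j+1) * wt ε M s
              exact pow_bound hεpos.le hM0.le T hTw (j+1) s)
            N B2
            (by
              intro m s hms hmd
              show (16*ε)^(j+1) * wt ε M s ≤ B2
              have hp1 : (16*ε)^(j+1) ≤ 16*ε := by
                calc (16*ε)^(j+1) ≤ (16*ε)^1 :=
                      pow_le_pow_of_le_one (by linarith) hε16 (by omega)
                  _ = 16*ε := pow_one _
              have hp2 : wt ε M s ≤ ((d:ℝ)+1)^2 * wt ε M N := by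
                have h := wt_aux hεpos.le hM1 (show s ≤ N by omega) (hab0 m s hms hmd)
                calc wt ε M s ≤ ((d:ℝ)+1)^2 * ε * M^N / ((N:ℝ)+1)^2 := h
                  _ = ((d:ℝ)+1)^2 * wt ε M N := by rw [wt]; ring
              calc (16*ε)^(j+1) * wt ε M s ≤ (16*ε) * (((d:ℝ)+1)^2 * wt ε M N) :=
                    mul_le_mul hp1 hp2 (wt_nonneg hεpos.le hM0.le s) (by linarith)
                _ = B2 := by rw [hB2def])
            hB2nn
          rw [hcoeffQ' (j+2)]
          linarith
      have htotal : η * ‖PowerSeries.coeff n A‖ ≤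
          ((D:ℝ)+1) * (((d:ℝ)+1) * (mp * B1) + ((d:ℝ)+1) * (mp * B2)) := by
        have hnorm : η * ‖PowerSeries.coeff n A‖ = ‖PowerSeries.coeff N (Q'.eval T)‖ := by
          rw [hηdef, ← norm_mul, hid, norm_neg]
        rw [hnorm, heval, map_sum]
        calc ‖∑ j ∈ Finset.range (D+1), PowerSeries.coeff N (Q'.coeff j * T^j)‖
            ≤ ∑ j ∈ Finset.range (D+1), ‖PowerSeries.coeff N (Q'.coeff j * T^j)‖ := norm_sum_le _ _
          _ ≤ ∑ j ∈ Finset.range (D+1), (((d:ℝ)+1) * (mp * B1) + ((d:ℝ)+1) * (mp * B2)) :=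
              Finset.sum_le_sum hterm
          _ = ((D:ℝ)+1) * (((d:ℝ)+1) * (mp * B1) + ((d:ℝ)+1) * (mp * B2)) := by
              rw [Finset.sum_const, Finset.card_range, nsmul_eq_mul]; push_cast; ring
      -- final arithmetic
      have hw0 : 0 ≤ wt ε M n := wt_nonneg hεpos.le hM0.le n
      have epow : M^(n-1) * M = M^n := by rw [← pow_succ]; congr 1; omega
      have hB1le : B1 ≤ ((d:ℝ)+1)^2 * wt ε M n / M := by
        rw [hB1def]
        have hnum : (0:ℝ) ≤ ((d:ℝ)+1)^2 * ε * M^(n-1) :=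
          mul_nonneg (mul_nonneg (by positivity) hεpos.le) (pow_nonneg hM0.le _)
        calc ((d:ℝ)+1)^2 * ε * M^(n-1) / ((N:ℝ)+1)^2
            ≤ ((d:ℝ)+1)^2 * ε * M^(n-1) / ((n:ℝ)+1)^2 := by
              apply div_le_div_of_nonneg_left hnum (by positivity)
              have : (n:ℝ) ≤ (N:ℝ) := Nat.cast_le.mpr (by omega)
              nlinarith [Nat.cast_nonneg (α := ℝ) n]
          _ = ((d:ℝ)+1)^2 * wt ε M n / M := by
              have em : M^(n-1) = M^n / M := by
                rw [eq_div_iff hM0.ne']; exact epow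
              rw [wt, em]
              have hn1 : (((n:ℝ)+1)^2) ≠ 0 := by positivity
              field_simp
      have hB2le : B2 ≤ 16 * c₂ * (((d:ℝ)+1)^2 * wt ε M n) := by
        rw [hB2def]
        have hsh : wt ε M N ≤ M^r * wt ε M n := by
          rw [hNdef]; exact wt_shift hεpos.le hM1 n r
        calc (16*ε) * (((d:ℝ)+1)^2 * wt ε M N)
            ≤ (16*ε) * (((d:ℝ)+1)^2 * (M^r * wt ε M n)) := by
              apply mul_le_mul_of_nonneg_left _ (by linarith)
              exact mul_le_mul_of_nonneg_left hsh (by positivity)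
          _ = 16 * (ε * M^r) * (((d:ℝ)+1)^2 * wt ε M n) := by ring
          _ = 16 * c₂ * (((d:ℝ)+1)^2 * wt ε M n) := by rw [hεM]
      have hMa' : ((D:ℝ)+1)*mp*((d:ℝ)+1)^3 ≤ η * M / 2 := by
        have hMa'' := hMa
        rw [div_le_iff₀ hη] at hMa''
        nlinarith [hMa'']
      have hfin1 : ((D:ℝ)+1) * (((d:ℝ)+1) * (mp * B1)) ≤ η/2 * wt ε M n := by
        have h1 : ((D:ℝ)+1) * (((d:ℝ)+1) * (mp * B1)) ≤
            ((D:ℝ)+1) * (((d:ℝ)+1) * (mp * (((d:ℝ)+1)^2 * wt ε M n / M))) := by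
          apply mul_le_mul_of_nonneg_left _ (by positivity)
          apply mul_le_mul_of_nonneg_left _ (by positivity)
          exact mul_le_mul_of_nonneg_left hB1le (le_of_lt hmp0)
        have h2 : ((D:ℝ)+1) * (((d:ℝ)+1) * (mp * (((d:ℝ)+1)^2 * wt ε M n / M)))
            = (((D:ℝ)+1)*mp*((d:ℝ)+1)^3) * (wt ε M n / M) := by ring
        have h3 : (((D:ℝ)+1)*mp*((d:ℝ)+1)^3) * (wt ε M n / M) ≤ (η * M / 2) * (wt ε M n / M) := by
          apply mul_le_mul_of_nonneg_right hMa'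
          positivity
        have h4 : (η * M / 2) * (wt ε M n / M) = η/2 * wt ε M n := by
          field_simp
        calc ((D:ℝ)+1) * (((d:ℝ)+1) * (mp * B1))
            ≤ ((D:ℝ)+1) * (((d:ℝ)+1) * (mp * (((d:ℝ)+1)^2 * wt ε M n / M))) := h1
          _ = (((D:ℝ)+1)*mp*((d:ℝ)+1)^3) * (wt ε M n / M) := h2
          _ ≤ (η * M / 2) * (wt ε M n / M) := h3
          _ = η/2 * wt ε M n := h4
      have hfin2 : ((D:ℝ)+1) * (((d:ℝ)+1) * (mp * B2)) ≤ η/2 * wt ε M n := by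
        have h1 : ((D:ℝ)+1) * (((d:ℝ)+1) * (mp * B2)) ≤
            ((D:ℝ)+1) * (((d:ℝ)+1) * (mp * (16 * c₂ * (((d:ℝ)+1)^2 * wt ε M n)))) := by
          apply mul_le_mul_of_nonneg_left _ (by positivity)
          apply mul_le_mul_of_nonneg_left _ (by positivity)
          exact mul_le_mul_of_nonneg_left hB2le (le_of_lt hmp0)
        have h2 : ((D:ℝ)+1) * (((d:ℝ)+1) * (mp * (16 * c₂ * (((d:ℝ)+1)^2 * wt ε M n))))
            = (32*((D:ℝ)+1)*mp*((d:ℝ)+1)^3*c₂) * (wt ε M n / 2) := by ring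
        have h3 : (32*((D:ℝ)+1)*mp*((d:ℝ)+1)^3*c₂) * (wt ε M n / 2) ≤ η * (wt ε M n / 2) :=
          mul_le_mul_of_nonneg_right hc₂2 (by linarith)
        have h4 : η * (wt ε M n / 2) = η/2 * wt ε M n := by ring
        calc ((D:ℝ)+1) * (((d:ℝ)+1) * (mp * B2))
            ≤ ((D:ℝ)+1) * (((d:ℝ)+1) * (mp * (16 * c₂ * (((d:ℝ)+1)^2 * wt ε M n)))) := h1
          _ = (32*((D:ℝ)+1)*mp*((d:ℝ)+1)^3*c₂) * (wt ε M n / 2) := h2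
          _ ≤ η * (wt ε M n / 2) := h3
          _ = η/2 * wt ε M n := h4
      have : η * ‖PowerSeries.coeff n A‖ ≤ η * wt ε M n := by
        calc η * ‖PowerSeries.coeff n A‖
            ≤ ((D:ℝ)+1) * (((d:ℝ)+1) * (mp * B1) + ((d:ℝ)+1) * (mp * B2)) := htotal
          _ = ((D:ℝ)+1) * (((d:ℝ)+1) * (mp * B1)) + ((D:ℝ)+1) * (((d:ℝ)+1) * (mp * B2)) := by
              ring
          _ ≤ η/2 * wt ε M n + η/2 * wt ε M n := add_le_add hfin1 hfin2
          _ = η * wt ε M n := by ring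
      exact le_of_mul_le_mul_left this hη
  refine ⟨M, hM0, fun n => ?_⟩
  calc ‖PowerSeries.coeff n A‖ ≤ wt ε M n := main n
    _ ≤ M^(n+1) := by
      rw [wt]
      have h1 : ε * M^n ≤ M^n := by
        nlinarith [pow_nonneg (le_of_lt hM0) n, hεc₂, hc₂16, pow_pos hM0 n]
      have h2 : (1:ℝ) ≤ ((n:ℝ)+1)^2 := by nlinarith [Nat.cast_nonneg (α := ℝ) n]
      have h3 : M^n ≤ M^(n+1) := pow_le_pow_right₀ hM1 (by omega)
      calc ε * M^n / ((n:ℝ)+1)^2 ≤ ε * M^n :=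
            div_le_self (mul_nonneg hεpos.le (pow_nonneg hM0.le n)) h2
        _ ≤ M^(n+1) := le_trans h1 h3

end Core

end AuxProof

/-- An algebraic power series over `ℂ` has positive radius of convergence: its
coefficients are bounded by `C^(n+1)` for some `C > 0`. -/
theorem coeff_bound_of_isAlgebraicPS (F : PowerSeries ℂ) (h : IsAlgebraicPS F) :
    ∃ C : ℝ, 0 < C ∧ ∀ n : ℕ, ‖PowerSeries.coeff n F‖ ≤ C ^ (n + 1) := by
  classical
  obtain ⟨P0, hP0ne, hP0⟩ := h
  have hex : ∃ k, ∃ P : Polynomial (Polynomial ℂ), P ≠ 0 ∧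
      Polynomial.eval₂ Polynomial.coeToPowerSeries.ringHom F P = 0 ∧ P.natDegree = k :=
    ⟨P0.natDegree, P0, hP0ne, hP0, rfl⟩
  obtain ⟨P, hPne, hPF, hPdeg⟩ := Nat.find_spec hex
  have hGne : Polynomial.eval₂ Polynomial.coeToPowerSeries.ringHom F P.derivative ≠ 0 := by
    intro hG0
    by_cases hd0 : P.derivative = 0
    · have hdeg0 : P.natDegree = 0 := Polynomial.natDegree_eq_zero_of_derivative_eq_zero hd0
      have hPC : P = Polynomial.C (P.coeff 0) := Polynomial.eq_C_of_natDegree_eq_zero hdeg0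
      rw [hPC, Polynomial.eval₂_C, Polynomial.coeToPowerSeries.ringHom_apply,
        Polynomial.coe_eq_zero_iff] at hPF
      exact hPne (by rw [hPC, hPF, map_zero])
    · have hne0 : P.natDegree ≠ 0 := by
        intro h0
        apply hd0
        rw [Polynomial.eq_C_of_natDegree_eq_zero h0, Polynomial.derivative_C]
      have hlt : P.derivative.natDegree < Nat.find hex := by
        rw [← hPdeg]
        exact Polynomial.natDegree_derivative_lt hne0
      exact Nat.find_min hex hlt ⟨P.derivative, hd0, hG0, rfl⟩
  set G₀ : PowerSeries ℂ :=
    Polynomial.eval₂ Polynomial.coeToPowerSeries.ringHom F P.derivative with hG₀def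
  have hGex : ∃ i, PowerSeries.coeff i G₀ ≠ 0 := by
    by_contra hc
    push_neg at hc
    exact hGne (PowerSeries.ext fun i => by rw [hc i, map_zero])
  set r : ℕ := Nat.find hGex with hrdef
  have hgr : PowerSeries.coeff r G₀ ≠ 0 := Nat.find_spec hGex
  have hglow : ∀ i < r, PowerSeries.coeff i G₀ = 0 :=
    fun i hi => not_not.mp (Nat.find_min hGex hi)
  set t : Polynomial ℂ := F.trunc (r+1) with htdef
  set A : PowerSeries ℂ := F - (t : PowerSeries ℂ) with hAdef
  have hAF : A + (t : PowerSeries ℂ) = F := by rw [hAdef]; ring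
  set Qs : Polynomial (Polynomial ℂ) := P.comp (Polynomial.X + Polynomial.C t) with hQsdef
  have hmapcomp : Qs.map Polynomial.coeToPowerSeries.ringHom
      = (P.map Polynomial.coeToPowerSeries.ringHom).comp
        (Polynomial.X + Polynomial.C ((t : PowerSeries ℂ))) := by
    rw [hQsdef, Polynomial.map_comp, Polynomial.map_add, Polynomial.map_X, Polynomial.map_C,
      Polynomial.coeToPowerSeries.ringHom_apply]
  have hevalA : (Qs.map Polynomial.coeToPowerSeries.ringHom).eval A = 0 := by
    rw [hmapcomp, Polynomial.eval_comp, Polynomial.eval_add, Polynomial.eval_X,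
      Polynomial.eval_C, hAF, Polynomial.eval_map]
    exact hPF
  have hder : ((Qs.map Polynomial.coeToPowerSeries.ringHom).derivative).eval A = G₀ := by
    rw [hmapcomp, Polynomial.derivative_comp, Polynomial.derivative_add,
      Polynomial.derivative_X, Polynomial.derivative_C, add_zero, one_mul,
      Polynomial.eval_comp, Polynomial.eval_add, Polynomial.eval_X, Polynomial.eval_C, hAF,
      Polynomial.derivative_map, Polynomial.eval_map]
  have hA0 : ∀ k ≤ r, PowerSeries.coeff k A = 0 := by
    intro k hk
    rw [hAdef, map_sub, htdef, Polynomial.coeff_coe, PowerSeries.coeff_trunc,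
      if_pos (by omega : k < r+1), sub_self]
  obtain ⟨C, hC, hCb⟩ := core Qs A r hevalA
    (by intro i hi; rw [hder]; exact hglow i hi)
    (by rw [hder]; exact hgr) hA0
  set mt : ℝ := ∑ k ∈ Finset.range (r+1), ‖t.coeff k‖ with hmtdef
  have hmt0 : 0 ≤ mt := Finset.sum_nonneg fun _ _ => norm_nonneg _
  have hmtb : ∀ n, ‖t.coeff n‖ ≤ mt := by
    intro n
    by_cases hn : n < r + 1
    · exact Finset.single_le_sum (f := fun k => ‖t.coeff k‖) (fun i _ => norm_nonneg _)
        (Finset.mem_range.mpr hn)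
    · rw [htdef, PowerSeries.coeff_trunc, if_neg hn, norm_zero]
      exact hmt0
  set m : ℝ := max C (mt + 1) with hmdef
  have hm1 : 1 ≤ m := le_trans (by linarith) (le_max_right _ _)
  have hmC : C ≤ m := le_max_left _ _
  refine ⟨2 * m, by linarith, fun n => ?_⟩
  have hsplit : PowerSeries.coeff n F = PowerSeries.coeff n A + t.coeff n := by
    rw [hAdef, map_sub, Polynomial.coeff_coe]
    ring
  have h1 : ‖PowerSeries.coeff n F‖ ≤ C^(n+1) + mt := by
    rw [hsplit]
    calc ‖PowerSeries.coeff n A + t.coeff n‖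
        ≤ ‖PowerSeries.coeff n A‖ + ‖t.coeff n‖ := norm_add_le _ _
      _ ≤ C^(n+1) + mt := add_le_add (hCb n) (hmtb n)
  have h2 : C^(n+1) ≤ m^(n+1) := pow_le_pow_left₀ hC.le hmC _
  have h3 : mt + 1 ≤ m^(n+1) :=
    le_trans (le_max_right _ _) (le_self_pow₀ hm1 (by omega))
  have h4 : (2*m)^(n+1) = 2^(n+1) * m^(n+1) := mul_pow _ _ _
  have h5 : (2:ℝ) ≤ 2^(n+1) := by
    calc (2:ℝ) = 2^1 := (pow_one 2).symm
      _ ≤ 2^(n+1) := pow_le_pow_right₀ (by norm_num) (by omega)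
  have hm0 : (0:ℝ) < m^(n+1) := by positivity
  calc ‖PowerSeries.coeff n F‖ ≤ C^(n+1) + mt := h1
    _ ≤ m^(n+1) + m^(n+1) := by linarith
    _ = 2 * m^(n+1) := by ring
    _ ≤ 2^(n+1) * m^(n+1) := by nlinarith
    _ = (2*m)^(n+1) := h4.symm
end
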